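/- arXiv:1501.04433 — 4 statements merged into one kernel-verified Lean document; each statement's English description precedes it below -/
import Mathlib

section
/- Let i, j > 0 be real numbers with i + j = 1, and let x = (x_1, x_2) ∈ [0,1)^2 belong to Bad(i,j). Then the set Bad_x(i,j) = { (α_1, α_2) ∈ [0,1)^2 : inf_{q ∈ ℤ, q ≠ 0} max( |q|^i ‖q x_1 − α_1‖, |q|^j ‖q x_2 − α_2‖ ) > 0 } has full Hausdorff dimension 2. (In the paper this is the special case n = 2, m = 1 of Theorem 1, where it is asserted that Bad_x(i,j) is 1/2-winning.) -/
open Set MeasureTheory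
open scoped NNReal ENNReal

/-- Distance from a real number to the nearest integer. -/
noncomputable def dni (x : ℝ) : ℝ := |x - round x|

namespace BadAux

lemma dni_nonneg (x : ℝ) : 0 ≤ dni x := abs_nonneg _

lemma dni_le (x : ℝ) (n : ℤ) : dni x ≤ |x - n| := round_le x n

lemma one_le_abs_q {q : ℤ} (hq : q ≠ 0) : (1 : ℝ) ≤ |(q : ℝ)| := by
  have h : (1 : ℤ) ≤ |q| := Int.one_le_abs (by omega)
  calc (1:ℝ) ≤ ((|q| : ℤ) : ℝ) := by exact_mod_cast h
    _ = |(q:ℝ)| := by push_cast; ring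

lemma abs_q_pos {q : ℤ} (hq : q ≠ 0) : (0 : ℝ) < |(q : ℝ)| :=
  lt_of_lt_of_le one_pos (one_le_abs_q hq)

/-- Configuration for the Cantor construction. -/
structure Cfg where
  i : ℝ
  j : ℝ
  x₁ : ℝ
  x₂ : ℝ
  ε : ℝ
  S : ℕ
  hi : 0 < i
  hij : i ≤ j
  hsum : i + j = 1
  hε0 : 0 < ε
  hε1 : ε ≤ 1 / 2
  hsep : ∀ r : ℤ, r ≠ 0 →
    ε ≤ |(r : ℝ)| ^ i * dni (r * x₁) ∨ ε ≤ |(r : ℝ)| ^ j * dni (r * x₂)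
  hS : 8 ≤ S

namespace Cfg

variable (P : Cfg)

def R : ℕ := 2 * P.S

def m : ℕ := P.S - 6

noncomputable def δ (l : ℕ) : ℝ := ((P.R : ℝ) ^ l)⁻¹ / 4

noncomputable def e : ℝ := P.ε * (P.ε / 8) ^ (P.j / P.i) / (P.R : ℝ) ^ 2

noncomputable def wq (q : ℤ) : ℝ := P.e * |(q : ℝ)| ^ (-P.i)

noncomputable def hq (q : ℤ) : ℝ := P.e * |(q : ℝ)| ^ (-P.j)

noncomputable def W (l : ℕ) : ℝ := P.e * (P.δ (l + 1) / P.e) ^ (P.i / P.j)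

noncomputable def σ (l : ℕ) : ℝ := 8 * (P.δ l / (2 * P.ε)) ^ (P.i / P.j)

lemma hj0 : 0 < P.j := lt_of_lt_of_le P.hi P.hij

lemma hi1 : P.i ≤ 1 / 2 := by nlinarith [P.hij, P.hsum]

lemma hj1 : P.j < 1 := by nlinarith [P.hi, P.hsum]

lemma hij_div_le_one : P.i / P.j ≤ 1 :=
  (div_le_one P.hj0).2 P.hij

lemma hij_div_pos : 0 < P.i / P.j := div_pos P.hi P.hj0

lemma hR16 : (16 : ℕ) ≤ P.R := by
  have := P.hS; simp only [R]; omega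

lemma hRr : (16 : ℝ) ≤ (P.R : ℝ) := by exact_mod_cast P.hR16

lemma hRr0 : (0 : ℝ) < (P.R : ℝ) := by linarith [P.hRr]

lemma δ_pos (l : ℕ) : 0 < P.δ l := by
  have := P.hRr0
  have : (0:ℝ) < (P.R:ℝ) ^ l := pow_pos this l
  simp only [δ]
  positivity

lemma δ_succ (l : ℕ) : P.δ (l + 1) = P.δ l / (P.R : ℝ) := by
  simp only [δ, pow_succ]
  field_simp

lemma δ_le (l : ℕ) : P.δ l ≤ 1 / 4 := by
  have h1 : (1:ℝ) ≤ (P.R:ℝ) ^ l := one_le_pow₀ (by linarith [P.hRr])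
  simp only [δ]
  have : ((P.R:ℝ) ^ l)⁻¹ ≤ 1 := by
    rw [inv_le_one_iff₀]; right; exact h1
  linarith

lemma δ_zero : P.δ 0 = 1 / 4 := by simp [δ]

lemma δ_two_step (l : ℕ) : P.δ (l + 2) = P.δ l / (P.R : ℝ) ^ 2 := by
  rw [show l + 2 = l + 1 + 1 by ring, δ_succ, δ_succ]
  ring

lemma κ_pos : 0 < (P.ε / 8) ^ (P.j / P.i) :=
  Real.rpow_pos_of_pos (by linarith [P.hε0]) _

lemma κ_le : (P.ε / 8) ^ (P.j / P.i) ≤ P.ε / 8 := by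
  have h8 : P.ε / 8 ≤ 1 := by linarith [P.hε1]
  have h0 : 0 < P.ε / 8 := by linarith [P.hε0]
  have hexp : 1 ≤ P.j / P.i := (one_le_div P.hi).2 P.hij
  calc (P.ε / 8) ^ (P.j / P.i) ≤ (P.ε / 8) ^ (1:ℝ) :=
        Real.rpow_le_rpow_of_exponent_ge h0 h8 hexp
    _ = P.ε / 8 := Real.rpow_one _

lemma e_pos : 0 < P.e := by
  have := P.κ_pos
  have := P.hε0
  have := P.hRr0
  simp only [e]
  positivity

/-- `e * R² = ε * κ`. -/
lemma e_mul : P.e * (P.R : ℝ) ^ 2 = P.ε * (P.ε / 8) ^ (P.j / P.i) := by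
  have h : ((P.R : ℝ) ^ 2) ≠ 0 := by nlinarith [P.hRr]
  simp only [e]
  exact div_mul_cancel₀ _ h

lemma e_le_base : P.e ≤ P.ε ^ 2 / (8 * (P.R : ℝ) ^ 2) := by
  have hκ := P.κ_le
  have hR2 : (0:ℝ) < (P.R:ℝ) ^ 2 := by nlinarith [P.hRr]
  simp only [e]
  rw [div_le_div_iff₀ hR2 (by nlinarith [P.hRr])]
  have : P.ε * (P.ε / 8) ^ (P.j / P.i) ≤ P.ε * (P.ε / 8) :=
    mul_le_mul_of_nonneg_left hκ (le_of_lt P.hε0)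
  nlinarith [P.hε0, hR2]

lemma e_le_small : P.e ≤ 1 / (32 * (P.R : ℝ) ^ 2) := by
  have := P.e_le_base
  have h2 : P.ε ^ 2 ≤ 1/4 := by nlinarith [P.hε0, P.hε1]
  have hR2 : (0:ℝ) < (P.R:ℝ) ^ 2 := by nlinarith [P.hRr]
  calc P.e ≤ P.ε ^ 2 / (8 * (P.R : ℝ) ^ 2) := this
    _ ≤ (1/4) / (8 * (P.R : ℝ) ^ 2) := by
        exact div_le_div_of_nonneg_right h2 (by nlinarith) |>.trans_eq rfl
    _ = 1 / (32 * (P.R : ℝ) ^ 2) := by ring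

lemma e_le_δ1 : P.e ≤ P.δ 1 := by
  have := P.e_le_small
  have hR2 : (1:ℝ) ≤ (P.R:ℝ) := by linarith [P.hRr]
  simp only [δ, pow_one]
  calc P.e ≤ 1 / (32 * (P.R : ℝ) ^ 2) := this
    _ ≤ (P.R:ℝ)⁻¹ / 4 := by
        have hR0 := P.hRr0
        rw [div_le_div_iff₀ (by nlinarith [P.hRr]) (by norm_num), inv_mul_eq_div,
          le_div_iff₀ hR0]
        nlinarith [P.hRr]

-- === chunk 2: windows, dangerous integers, separation ===

lemma two_δ_succ_le (l : ℕ) : 2 * P.δ (l+1) ≤ P.δ l := by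
  have hδ := P.δ_pos l
  have hRr := P.hRr
  have h : P.δ l / (P.R:ℝ) ≤ P.δ l / 16 :=
    div_le_div_of_nonneg_left (le_of_lt hδ) (by norm_num) hRr
  rw [P.δ_succ]
  linarith

def Win (l : ℕ) (q : ℤ) : Prop := P.hq q ≤ P.δ (l + 1) ∧ P.δ (l + 2) < P.hq q

def Dng (l : ℕ) (c : ℝ × ℝ) (q : ℤ) : Prop :=
  q ≠ 0 ∧ P.Win l q ∧ ∃ a b : ℝ,
    a ∈ Icc c.1 (c.1 + P.δ l) ∧ b ∈ Icc c.2 (c.2 + P.δ l) ∧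
    dni ((q : ℝ) * P.x₁ - a) < P.wq q ∧ dni ((q : ℝ) * P.x₂ - b) < P.hq q

lemma rpow_neg_i_eq (y : ℝ) (hy : 0 ≤ y) :
    y ^ (-P.i) = (y ^ (-P.j)) ^ (P.i / P.j) := by
  rw [← Real.rpow_mul hy]
  congr 1
  have : P.j ≠ 0 := ne_of_gt P.hj0
  field_simp

lemma hq_pos {q : ℤ} (h : q ≠ 0) : 0 < P.hq q :=
  mul_pos P.e_pos (Real.rpow_pos_of_pos (abs_q_pos h) _)

lemma wq_pos {q : ℤ} (h : q ≠ 0) : 0 < P.wq q :=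
  mul_pos P.e_pos (Real.rpow_pos_of_pos (abs_q_pos h) _)

lemma wq_le_W {l : ℕ} {q : ℤ} (h : P.Win l q) : P.wq q ≤ P.W l := by
  have he := P.e_pos
  have hb : (0:ℝ) ≤ |(q:ℝ)| ^ (-P.j) := Real.rpow_nonneg (abs_nonneg _) _
  have h1 : |(q:ℝ)| ^ (-P.j) ≤ P.δ (l+1) / P.e := by
    rw [le_div_iff₀ he]
    have h2 := h.1
    simp only [hq] at h2
    linarith
  have h2 : (|(q:ℝ)| ^ (-P.j)) ^ (P.i / P.j) ≤ (P.δ (l+1) / P.e) ^ (P.i / P.j) :=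
    Real.rpow_le_rpow hb h1 (le_of_lt P.hij_div_pos)
  calc P.wq q = P.e * (|(q:ℝ)| ^ (-P.j)) ^ (P.i / P.j) := by
        rw [wq, P.rpow_neg_i_eq _ (abs_nonneg _)]
    _ ≤ P.e * (P.δ (l+1) / P.e) ^ (P.i / P.j) :=
        mul_le_mul_of_nonneg_left h2 (le_of_lt he)
    _ = P.W l := rfl

lemma κ_rpow : ((P.ε / 8) ^ (P.j / P.i)) ^ (P.i / P.j) = P.ε / 8 := by
  rw [← Real.rpow_mul (by linarith [P.hε0] : (0:ℝ) ≤ P.ε / 8)]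
  rw [show P.j / P.i * (P.i / P.j) = 1 by
    have h1 : P.i ≠ 0 := ne_of_gt P.hi
    have h2 : P.j ≠ 0 := ne_of_gt P.hj0
    field_simp]
  exact Real.rpow_one _

lemma σ_pos (l : ℕ) : 0 < P.σ l := by
  have : (0:ℝ) < P.δ l / (2 * P.ε) := div_pos (P.δ_pos l) (by linarith [P.hε0])
  exact mul_pos (by norm_num) (Real.rpow_pos_of_pos this _)

/-- the identity `ε * (δ (l+2) / (2e))^(i/j) = σ l`. -/
lemma σ_eq (l : ℕ) : P.ε * (P.δ (l+2) / (2 * P.e)) ^ (P.i / P.j) = P.σ l := by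
  have hε := P.hε0
  have he := P.e_pos
  have hκ := P.κ_pos
  have hR0 : ((P.R:ℝ)) ≠ 0 := ne_of_gt P.hRr0
  have hκ0 : ((P.ε/8) ^ (P.j/P.i)) ≠ 0 := ne_of_gt hκ
  have key : P.δ (l+2) / (2 * P.e) =
      (P.δ l / (2 * P.ε)) * ((P.ε/8) ^ (P.j/P.i))⁻¹ := by
    rw [P.δ_two_step]
    simp only [e]
    field_simp
    all_goals tauto
  have ht0 : (0:ℝ) < P.δ l / (2 * P.ε) := div_pos (P.δ_pos l) (by linarith)
  rw [key, Real.mul_rpow (le_of_lt ht0) (le_of_lt (inv_pos.2 hκ)),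
    Real.inv_rpow (le_of_lt hκ), P.κ_rpow]
  simp only [σ]
  field_simp

lemma σ_ge (l : ℕ) : 8 * P.δ l ≤ P.σ l := by
  have hε := P.hε0
  have hδ := P.δ_pos l
  have ht0 : 0 < P.δ l / (2*P.ε) := div_pos hδ (by linarith)
  rcases le_total (P.δ l / (2*P.ε)) 1 with h | h
  · have h1 : P.δ l / (2*P.ε) ≤ (P.δ l / (2*P.ε)) ^ (P.i/P.j) := by
      calc P.δ l / (2*P.ε) = (P.δ l / (2*P.ε)) ^ (1:ℝ) := (Real.rpow_one _).symm
        _ ≤ _ := Real.rpow_le_rpow_of_exponent_ge ht0 h P.hij_div_le_one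
    have h2 : 8 * (P.δ l / (2*P.ε)) ≤ P.σ l := by
      simp only [σ]; linarith
    have h3 : P.δ l ≤ P.δ l / (2*P.ε) := by
      rw [le_div_iff₀ (by linarith)]
      nlinarith [P.hε1]
    linarith
  · have h1 : (1:ℝ) ≤ (P.δ l / (2*P.ε)) ^ (P.i/P.j) := by
      calc (1:ℝ) = (P.δ l / (2*P.ε)) ^ (0:ℝ) := (Real.rpow_zero _).symm
        _ ≤ _ := Real.rpow_le_rpow_of_exponent_le h (le_of_lt P.hij_div_pos)
    have h2 : (8:ℝ) ≤ P.σ l := by simp only [σ]; linarith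
    nlinarith [P.δ_le l]

lemma eR_le : P.e * (P.R:ℝ) ≤ 2 * P.ε := by
  have h1 := P.e_le_base
  have hR := P.hRr
  have hR0 := P.hRr0
  have hε := P.hε0
  have hε1 := P.hε1
  have h2 : P.e * (P.R:ℝ) ≤ P.ε^2 / (8*(P.R:ℝ)) := by
    have hm := mul_le_mul_of_nonneg_right h1 (le_of_lt hR0)
    calc P.e * (P.R:ℝ) ≤ P.ε ^ 2 / (8 * (P.R:ℝ)^2) * (P.R:ℝ) := hm
      _ = P.ε^2/(8*(P.R:ℝ)) := by field_simp
  have h3 : P.ε^2/(8*(P.R:ℝ)) ≤ P.ε^2 := by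
    rw [div_le_iff₀ (by nlinarith)]
    nlinarith [sq_nonneg P.ε]
  nlinarith

lemma W_le (l : ℕ) : P.W l ≤ P.σ l / 4 := by
  have he := P.e_pos
  have hε := P.hε0
  have hR0 := P.hRr0
  have hδ := P.δ_pos l
  have hσ := P.σ_pos l
  have key : P.δ (l+1) / P.e = (P.δ l / (2*P.ε)) * (2*P.ε/(P.e * (P.R:ℝ))) := by
    rw [P.δ_succ]
    field_simp
    all_goals tauto
  have hbase : 1 ≤ 2*P.ε/(P.e*(P.R:ℝ)) := by
    rw [le_div_iff₀ (by positivity)]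
    linarith [P.eR_le]
  have h2 : (2*P.ε/(P.e*(P.R:ℝ))) ^ (P.i/P.j) ≤ 2*P.ε/(P.e*(P.R:ℝ)) := by
    calc (2*P.ε/(P.e*(P.R:ℝ))) ^ (P.i/P.j) ≤ (2*P.ε/(P.e*(P.R:ℝ))) ^ (1:ℝ) :=
          Real.rpow_le_rpow_of_exponent_le hbase P.hij_div_le_one
      _ = _ := Real.rpow_one _
  have ht0 : (0:ℝ) < P.δ l / (2*P.ε) := div_pos hδ (by linarith)
  have hW : P.W l = P.e * ((P.δ l / (2*P.ε)) ^ (P.i/P.j) * (2*P.ε/(P.e*(P.R:ℝ))) ^ (P.i/P.j)) := by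
    rw [W, key, Real.mul_rpow (le_of_lt ht0) (by positivity)]
  have h3 : P.W l ≤ P.e * ((P.δ l / (2*P.ε)) ^ (P.i/P.j) * (2*P.ε/(P.e*(P.R:ℝ)))) := by
    rw [hW]
    have hpow : (0:ℝ) < (P.δ l / (2*P.ε)) ^ (P.i/P.j) := Real.rpow_pos_of_pos ht0 _
    have := mul_le_mul_of_nonneg_left h2 (le_of_lt hpow)
    nlinarith
  have h4 : P.e * ((P.δ l / (2*P.ε)) ^ (P.i/P.j) * (2*P.ε/(P.e*(P.R:ℝ)))) =
      P.σ l * (P.ε / (4 * (P.R:ℝ))) := by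
    simp only [σ]
    field_simp
    ring
  have h5 : P.σ l * (P.ε / (4 * (P.R:ℝ))) ≤ P.σ l / 4 := by
    have : P.ε / (4*(P.R:ℝ)) ≤ 1/4 := by
      rw [div_le_div_iff₀ (by nlinarith) (by norm_num)]
      nlinarith [P.hRr, P.hε1]
    calc P.σ l * (P.ε / (4 * (P.R:ℝ))) ≤ P.σ l * (1/4) :=
          mul_le_mul_of_nonneg_left this (le_of_lt hσ)
      _ = P.σ l / 4 := by ring
  linarith

lemma case_j_gap (l : ℕ) : 2 * P.δ l < P.ε * (P.δ (l+2) / (2 * P.e)) := by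
  have hε := P.hε0
  have hδ := P.δ_pos l
  have hκ := P.κ_pos
  have hR0 : ((P.R:ℝ)) ≠ 0 := ne_of_gt P.hRr0
  have key : P.ε * (P.δ (l+2) / (2 * P.e)) = P.δ l / (2 * (P.ε/8) ^ (P.j/P.i)) := by
    rw [P.δ_two_step]
    simp only [e]
    field_simp
    all_goals tauto
  rw [key]
  rw [lt_div_iff₀ (by linarith)]
  nlinarith [P.κ_le, P.hε1]

/-- the two alternatives for a difference of two dangerous window integers. -/
lemma pair_sep {l : ℕ} {q₁ q₂ : ℤ} (h1 : P.Win l q₁) (h2 : P.Win l q₂)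
    (h10 : q₁ ≠ 0) (h20 : q₂ ≠ 0) (hne : q₁ ≠ q₂) :
    P.σ l ≤ dni (((q₁ - q₂ : ℤ) : ℝ) * P.x₁) ∨
    2 * P.δ l < dni (((q₁ - q₂ : ℤ) : ℝ) * P.x₂) := by
  have he := P.e_pos
  have hε := P.hε0
  have hδ2 := P.δ_pos (l+2)
  set r : ℤ := q₁ - q₂ with hr
  have hr0 : r ≠ 0 := sub_ne_zero.2 hne
  have har : (0:ℝ) < |(r:ℝ)| := abs_q_pos hr0
  -- step: |r|^(-j) ≥ δ_{l+2}/(2e)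
  have habs : |(r:ℝ)| ≤ |(q₁:ℝ)| + |(q₂:ℝ)| := by
    rw [hr]
    push_cast
    exact abs_sub _ _
  have hqj : ∀ q : ℤ, q ≠ 0 → P.Win l q → |(q:ℝ)| ^ P.j < P.e / P.δ (l+2) := by
    intro q hq0 hw
    have hp : (0:ℝ) < |(q:ℝ)| ^ P.j := Real.rpow_pos_of_pos (abs_q_pos hq0) _
    have hwin := hw.2
    simp only [hq, Real.rpow_neg (abs_nonneg _)] at hwin
    rw [lt_div_iff₀ hδ2]
    calc |(q:ℝ)| ^ P.j * P.δ (l+2) < |(q:ℝ)| ^ P.j * (P.e * (|(q:ℝ)| ^ P.j)⁻¹) :=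
          mul_lt_mul_of_pos_left hwin hp
      _ = P.e := by field_simp
  have hM : |(r:ℝ)| ^ P.j ≤ 2 * (P.e / P.δ (l+2)) := by
    have hmax : |(r:ℝ)| ≤ 2 * max |(q₁:ℝ)| |(q₂:ℝ)| := by
      have h1m : |(q₁:ℝ)| ≤ max |(q₁:ℝ)| |(q₂:ℝ)| := le_max_left _ _
      have h2m : |(q₂:ℝ)| ≤ max |(q₁:ℝ)| |(q₂:ℝ)| := le_max_right _ _
      linarith
    have hmax0 : (0:ℝ) ≤ max |(q₁:ℝ)| |(q₂:ℝ)| := le_max_of_le_left (abs_nonneg _)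
    have h2j : (2:ℝ) ^ P.j ≤ 2 := by
      calc (2:ℝ) ^ P.j ≤ (2:ℝ) ^ (1:ℝ) :=
            Real.rpow_le_rpow_of_exponent_le one_le_two (le_of_lt P.hj1)
        _ = 2 := Real.rpow_one 2
    have hmj : (max |(q₁:ℝ)| |(q₂:ℝ)|) ^ P.j < P.e / P.δ (l+2) := by
      rcases max_cases |(q₁:ℝ)| |(q₂:ℝ)| with ⟨hm, _⟩ | ⟨hm, _⟩ <;> rw [hm]
      · exact hqj q₁ h10 h1
      · exact hqj q₂ h20 h2
    calc |(r:ℝ)| ^ P.j ≤ (2 * max |(q₁:ℝ)| |(q₂:ℝ)|) ^ P.j :=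
          Real.rpow_le_rpow (abs_nonneg _) hmax (le_of_lt P.hj0)
      _ = (2:ℝ) ^ P.j * (max |(q₁:ℝ)| |(q₂:ℝ)|) ^ P.j :=
          Real.mul_rpow (by norm_num) hmax0
      _ ≤ 2 * (P.e / P.δ (l+2)) := by
          have h0 : (0:ℝ) ≤ (max |(q₁:ℝ)| |(q₂:ℝ)|) ^ P.j := Real.rpow_nonneg hmax0 _
          nlinarith [div_pos he hδ2]
  have hrj : P.δ (l+2) / (2 * P.e) ≤ |(r:ℝ)| ^ (-P.j) := by
    rw [Real.rpow_neg (abs_nonneg _)]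
    have hp : (0:ℝ) < |(r:ℝ)| ^ P.j := Real.rpow_pos_of_pos har _
    rw [div_le_iff₀ (by linarith [he]), inv_mul_eq_div, le_div_iff₀ hp]
    calc P.δ (l+2) * |(r:ℝ)| ^ P.j ≤ P.δ (l+2) * (2 * (P.e / P.δ (l+2))) :=
          mul_le_mul_of_nonneg_left hM (le_of_lt hδ2)
      _ = 2 * P.e := by field_simp
  rcases P.hsep r hr0 with hA | hB
  · left
    have hp : (0:ℝ) < |(r:ℝ)| ^ P.i := Real.rpow_pos_of_pos har _
    have hD : P.ε / (|(r:ℝ)| ^ P.i) ≤ dni ((r:ℝ) * P.x₁) := by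
      rw [div_le_iff₀ hp]; nlinarith [hA]
    have hD' : P.ε * |(r:ℝ)| ^ (-P.i) ≤ dni ((r:ℝ) * P.x₁) := by
      rwa [Real.rpow_neg (abs_nonneg _), ← div_eq_mul_inv]
    have hmono : P.ε * (P.δ (l+2) / (2*P.e)) ^ (P.i/P.j) ≤ P.ε * |(r:ℝ)| ^ (-P.i) := by
      rw [P.rpow_neg_i_eq _ (abs_nonneg _)]
      exact mul_le_mul_of_nonneg_left
        (Real.rpow_le_rpow (by positivity) hrj (le_of_lt P.hij_div_pos)) (le_of_lt hε)
    calc P.σ l = P.ε * (P.δ (l+2) / (2*P.e)) ^ (P.i/P.j) := (P.σ_eq l).symm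
      _ ≤ P.ε * |(r:ℝ)| ^ (-P.i) := hmono
      _ ≤ dni ((r:ℝ) * P.x₁) := hD'
  · right
    have hp : (0:ℝ) < |(r:ℝ)| ^ P.j := Real.rpow_pos_of_pos har _
    have hD : P.ε / (|(r:ℝ)| ^ P.j) ≤ dni ((r:ℝ) * P.x₂) := by
      rw [div_le_iff₀ hp]; nlinarith [hB]
    have hD' : P.ε * |(r:ℝ)| ^ (-P.j) ≤ dni ((r:ℝ) * P.x₂) := by
      rwa [Real.rpow_neg (abs_nonneg _), ← div_eq_mul_inv]
    have hmono : P.ε * (P.δ (l+2) / (2*P.e)) ≤ P.ε * |(r:ℝ)| ^ (-P.j) :=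
      mul_le_mul_of_nonneg_left hrj (le_of_lt hε)
    calc 2 * P.δ l < P.ε * (P.δ (l+2) / (2*P.e)) := P.case_j_gap l
      _ ≤ P.ε * |(r:ℝ)| ^ (-P.j) := hmono
      _ ≤ dni ((r:ℝ) * P.x₂) := hD'

-- === chunk 3: at most two dangerous q, row selection ===

lemma dng_two {l : ℕ} {c : ℝ × ℝ} {q₁ q₂ q₃ : ℤ}
    (hd1 : P.Dng l c q₁) (hd2 : P.Dng l c q₂) (hd3 : P.Dng l c q₃)
    (h12 : q₁ ≠ q₂) (h13 : q₁ ≠ q₃) (h23 : q₂ ≠ q₃) : False := by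
  have hσ := P.σ_pos l
  have hWσ := P.W_le l
  have hδσ := P.σ_ge l
  have hδ := P.δ_pos l
  have hδ' := P.δ_pos (l+1)
  have hRr := P.hRr
  have hδsucc := P.δ_succ l
  -- extraction
  have extract : ∀ q : ℤ, P.Dng l c q → ∃ (n : ℤ) (b : ℝ),
      c.1 - P.W l ≤ (q:ℝ) * P.x₁ - n ∧ (q:ℝ) * P.x₁ - n ≤ c.1 + P.δ l + P.W l ∧
      b ∈ Icc c.2 (c.2 + P.δ l) ∧ dni ((q:ℝ) * P.x₂ - b) < P.δ (l+1) := by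
    intro q hdq
    obtain ⟨hq0, hwin, a, b, ha, hb, hx1, hx2⟩ := hdq
    refine ⟨round ((q:ℝ) * P.x₁ - a), b, ?_, ?_, hb, ?_⟩
    · have h1 : |(q:ℝ) * P.x₁ - a - round ((q:ℝ) * P.x₁ - a)| < P.W l :=
        lt_of_lt_of_le hx1 (P.wq_le_W hwin)
      have := abs_lt.1 h1
      have ha1 := ha.1
      push_cast
      linarith [this.1, this.2]
    · have h1 : |(q:ℝ) * P.x₁ - a - round ((q:ℝ) * P.x₁ - a)| < P.W l :=
        lt_of_lt_of_le hx1 (P.wq_le_W hwin)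
      have := abs_lt.1 h1
      have ha2 := ha.2
      push_cast
      linarith [this.1, this.2]
    · exact lt_of_lt_of_le hx2 hwin.1
  obtain ⟨n₁, b₁, hp1a, hp1b, hb1, hy1⟩ := extract q₁ hd1
  obtain ⟨n₂, b₂, hp2a, hp2b, hb2, hy2⟩ := extract q₂ hd2
  obtain ⟨n₃, b₃, hp3a, hp3b, hb3, hy3⟩ := extract q₃ hd3
  -- pairwise x-separation
  have pairx : ∀ (qa qb : ℤ) (na nb : ℤ) (ba bb : ℝ), qa ≠ qb →
      P.Dng l c qa → P.Dng l c qb →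
      ba ∈ Icc c.2 (c.2 + P.δ l) → bb ∈ Icc c.2 (c.2 + P.δ l) →
      dni ((qa:ℝ) * P.x₂ - ba) < P.δ (l+1) → dni ((qb:ℝ) * P.x₂ - bb) < P.δ (l+1) →
      P.σ l ≤ |((qa:ℝ) * P.x₁ - na) - ((qb:ℝ) * P.x₁ - nb)| := by
    intro qa qb na nb ba bb hne hda hdb hba hbb hya hyb
    rcases P.pair_sep hda.2.1 hdb.2.1 hda.1 hdb.1 hne with hcase | hcase
    · -- x-separation
      have key : dni (((qa - qb : ℤ):ℝ) * P.x₁) ≤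
          |((qa:ℝ) * P.x₁ - na) - ((qb:ℝ) * P.x₁ - nb)| := by
        have := dni_le (((qa - qb : ℤ):ℝ) * P.x₁) (na - nb)
        have heq : ((qa - qb : ℤ):ℝ) * P.x₁ - ((na - nb : ℤ):ℝ) =
            ((qa:ℝ) * P.x₁ - na) - ((qb:ℝ) * P.x₁ - nb) := by push_cast; ring
        rw [heq] at this
        exact this
      linarith [hcase, key]
    · -- y-proximity contradiction
      exfalso
      have key : dni (((qa - qb : ℤ):ℝ) * P.x₂) ≤
          dni ((qa:ℝ) * P.x₂ - ba) + dni ((qb:ℝ) * P.x₂ - bb) + |ba - bb| := by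
        set nna := round ((qa:ℝ) * P.x₂ - ba)
        set nnb := round ((qb:ℝ) * P.x₂ - bb)
        have h1 := dni_le (((qa - qb : ℤ):ℝ) * P.x₂) (nna - nnb)
        have heq : ((qa - qb : ℤ):ℝ) * P.x₂ - ((nna - nnb : ℤ):ℝ) =
            ((qa:ℝ) * P.x₂ - ba - nna) - ((qb:ℝ) * P.x₂ - bb - nnb) + (ba - bb) := by
          push_cast; ring
        rw [heq] at h1
        calc dni (((qa - qb : ℤ):ℝ) * P.x₂) ≤
            |((qa:ℝ) * P.x₂ - ba - nna) - ((qb:ℝ) * P.x₂ - bb - nnb) + (ba - bb)| := h1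
          _ ≤ |((qa:ℝ) * P.x₂ - ba - nna)| + |((qb:ℝ) * P.x₂ - bb - nnb)| + |ba - bb| := by
              have := abs_add_le (((qa:ℝ) * P.x₂ - ba - nna) - ((qb:ℝ) * P.x₂ - bb - nnb)) (ba - bb)
              have h2 := abs_sub ((qa:ℝ) * P.x₂ - ba - nna) ((qb:ℝ) * P.x₂ - bb - nnb)
              linarith
          _ = dni ((qa:ℝ) * P.x₂ - ba) + dni ((qb:ℝ) * P.x₂ - bb) + |ba - bb| := rfl
      have hbab : |ba - bb| ≤ P.δ l := by
        rw [abs_le]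
        constructor <;> [linarith [hba.1, hbb.2]; linarith [hba.2, hbb.1]]
      have hsmall : dni (((qa - qb : ℤ):ℝ) * P.x₂) ≤ 2 * P.δ l := by
        have h16 : 2 * P.δ (l+1) ≤ P.δ l := P.two_δ_succ_le l
        linarith [key, hy1]
      linarith [hcase, hsmall]
  have s12 := pairx q₁ q₂ n₁ n₂ b₁ b₂ h12 hd1 hd2 hb1 hb2 hy1 hy2
  have s13 := pairx q₁ q₃ n₁ n₃ b₁ b₃ h13 hd1 hd3 hb1 hb3 hy1 hy3
  have s23 := pairx q₂ q₃ n₂ n₃ b₂ b₃ h23 hd2 hd3 hb2 hb3 hy2 hy3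
  -- three points in a short interval
  have hL : P.δ l + 2 * P.W l < 2 * P.σ l := by linarith
  rcases abs_cases (((q₁:ℝ) * P.x₁ - n₁) - ((q₂:ℝ) * P.x₁ - n₂)) with ⟨e1,_⟩|⟨e1,_⟩ <;>
  rcases abs_cases (((q₁:ℝ) * P.x₁ - n₁) - ((q₃:ℝ) * P.x₁ - n₃)) with ⟨e2,_⟩|⟨e2,_⟩ <;>
  rcases abs_cases (((q₂:ℝ) * P.x₁ - n₂) - ((q₃:ℝ) * P.x₁ - n₃)) with ⟨e3,_⟩|⟨e3,_⟩ <;>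
  rw [e1] at s12 <;> rw [e2] at s13 <;> rw [e3] at s23 <;> linarith

/-- a bad row of the cell at level `l` with corner `c`. -/
def rowBad (l : ℕ) (c : ℝ × ℝ) (t : ℕ) : Prop :=
  ∃ q : ℤ, P.Dng l c q ∧ ∃ b : ℝ,
    b ∈ Icc (c.2 + t * P.δ (l+1)) (c.2 + (t+1) * P.δ (l+1)) ∧
    dni ((q:ℝ) * P.x₂ - b) < P.hq q

lemma rowBad_same_q {l : ℕ} {c : ℝ × ℝ} {q : ℤ} (hwq : P.hq q ≤ P.δ (l+1))
    {t t' : ℕ} (ht : t + 1 ≤ P.R) (ht' : t' + 1 ≤ P.R)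
    {b b' : ℝ} (hb : b ∈ Icc (c.2 + t * P.δ (l+1)) (c.2 + (t+1) * P.δ (l+1)))
    (hb' : b' ∈ Icc (c.2 + t' * P.δ (l+1)) (c.2 + (t'+1) * P.δ (l+1)))
    (hd : dni ((q:ℝ) * P.x₂ - b) < P.hq q) (hd' : dni ((q:ℝ) * P.x₂ - b') < P.hq q) :
    t ≤ t' + 2 ∧ t' ≤ t + 2 := by
  have hδ' := P.δ_pos (l+1)
  have hδ := P.δ_pos l
  have hδle := P.δ_le l
  have hδsucc := P.δ_succ l
  have hRr := P.hRr
  set n := round ((q:ℝ) * P.x₂ - b)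
  set n' := round ((q:ℝ) * P.x₂ - b')
  have h1 : |(q:ℝ) * P.x₂ - b - n| < P.δ (l+1) := lt_of_lt_of_le hd hwq
  have h2 : |(q:ℝ) * P.x₂ - b' - n'| < P.δ (l+1) := lt_of_lt_of_le hd' hwq
  -- rows are inside the cell
  have hrow : ∀ u : ℕ, u + 1 ≤ P.R → (u:ℝ) * P.δ (l+1) ≥ 0 ∧ ((u:ℝ)+1) * P.δ (l+1) ≤ P.δ l := by
    intro u hu
    constructor
    · positivity
    · have : ((u:ℝ)+1) ≤ (P.R:ℝ) := by exact_mod_cast hu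
      calc ((u:ℝ)+1) * P.δ (l+1) ≤ (P.R:ℝ) * P.δ (l+1) :=
            mul_le_mul_of_nonneg_right this (le_of_lt hδ')
        _ = P.δ l := by rw [hδsucc]; field_simp
  have hrt := hrow t ht
  have hrt' := hrow t' ht'
  have hbb' : |b - b'| ≤ P.δ l := by
    rw [abs_le]
    constructor
    · nlinarith [hb.1, hb'.2, hrt.1, hrt'.2]
    · nlinarith [hb.2, hb'.1, hrt.2, hrt'.1]
  have habs1 := abs_lt.1 h1
  have habs2 := abs_lt.1 h2
  have h16 : 2 * P.δ (l+1) ≤ P.δ l := P.two_δ_succ_le l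
  have hnn' : n = n' := by
    have : |((n' - n : ℤ) : ℝ)| < 1 := by
      have heq : ((n' - n : ℤ):ℝ) = ((q:ℝ) * P.x₂ - b - n) - ((q:ℝ) * P.x₂ - b' - n') + (b - b') := by
        push_cast; ring
      rw [heq]
      calc |((q:ℝ) * P.x₂ - b - n) - ((q:ℝ) * P.x₂ - b' - n') + (b - b')| ≤
          |(q:ℝ) * P.x₂ - b - n| + |(q:ℝ) * P.x₂ - b' - n'| + |b - b'| := by
            have ha := abs_add_le (((q:ℝ) * P.x₂ - b - n) - ((q:ℝ) * P.x₂ - b' - n')) (b - b')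
            have hs := abs_sub ((q:ℝ) * P.x₂ - b - n) ((q:ℝ) * P.x₂ - b' - n')
            linarith
        _ < 1 := by linarith [hδle]
    have h0 : |n' - n| < 1 := by exact_mod_cast this
    have := Int.abs_lt_one_iff.1 h0
    omega
  have hclose : |b - b'| < 2 * P.δ (l+1) := by
    have heq : b - b' = ((q:ℝ) * P.x₂ - b' - n') - ((q:ℝ) * P.x₂ - b - n) := by
      rw [hnn']; ring
    rw [heq]
    have := abs_sub ((q:ℝ) * P.x₂ - b' - n') ((q:ℝ) * P.x₂ - b - n)
    linarith
  -- conclude on row indices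
  constructor
  · by_contra hcon
    push_neg at hcon
    have : (t':ℝ) + 3 ≤ (t:ℝ) := by exact_mod_cast hcon
    have hlow : b - b' ≥ 2 * P.δ (l+1) := by
      have hb1 := hb.1
      have hb2' := hb'.2
      nlinarith
    have := abs_le.1 (le_of_lt hclose)
    linarith [le_abs_self (b - b')]
  · by_contra hcon
    push_neg at hcon
    have : (t:ℝ) + 3 ≤ (t':ℝ) := by exact_mod_cast hcon
    have hlow : b' - b ≥ 2 * P.δ (l+1) := by
      have hb1' := hb'.1
      have hb2 := hb.2
      nlinarith
    have := neg_abs_le (b - b')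
    linarith [hclose]

open Classical in
/-- good even rows of a cell. -/
noncomputable def goodRowsS (l : ℕ) (c : ℝ × ℝ) : Finset ℕ :=
  (Finset.range P.S).filter (fun s => ¬ P.rowBad l c (2 * s))

lemma goodRowsS_card (l : ℕ) (c : ℝ × ℝ) : P.m ≤ (P.goodRowsS l c).card := by
  classical
  -- the two possible dangerous q
  obtain ⟨A, B, hAB⟩ : ∃ A B : ℤ, ∀ q, P.Dng l c q → q = A ∨ q = B := by
    by_cases h : ∃ q, P.Dng l c q
    · obtain ⟨A, hA⟩ := h
      by_cases h2 : ∃ q, P.Dng l c q ∧ q ≠ A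
      · obtain ⟨B, hB, hBA⟩ := h2
        refine ⟨A, B, fun q hq => ?_⟩
        by_contra hc
        push_neg at hc
        exact P.dng_two hq hA hB hc.1 hc.2 (Ne.symm hBA)
      · push_neg at h2
        exact ⟨A, A, fun q hq => Or.inl (h2 q hq)⟩
    · push_neg at h
      exact ⟨0, 0, fun q hq => absurd hq (h q)⟩
  classical
  have hbadcard : ((Finset.range P.S).filter (fun s => P.rowBad l c (2 * s))).card ≤ 6 := by
    set f : ℕ → ℤ × ℕ := fun s =>
      ((if h : P.rowBad l c (2 * s) then h.choose else 0), s % 3) with hf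
    have hmaps : ∀ s ∈ (Finset.range P.S).filter (fun s => P.rowBad l c (2 * s)),
        f s ∈ (({A, B} : Finset ℤ) ×ˢ Finset.range 3) := by
      intro s hs
      simp only [Finset.mem_filter] at hs
      simp only [hf, dif_pos hs.2, Finset.mem_product, Finset.mem_range,
        Finset.mem_insert, Finset.mem_singleton]
      exact ⟨hAB _ hs.2.choose_spec.1, Nat.mod_lt _ (by norm_num)⟩
    have hinj : Set.InjOn f ((Finset.range P.S).filter (fun s => P.rowBad l c (2 * s))) := by
      intro s hs s' hs' heq
      rw [Finset.mem_coe, Finset.mem_filter, Finset.mem_range] at hs hs'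
      simp only [hf, dif_pos hs.2, dif_pos hs'.2, Prod.mk.injEq] at heq
      obtain ⟨heq1, heq2⟩ := heq
      obtain ⟨hdq, b, hbmem, hbd⟩ := hs.2.choose_spec
      obtain ⟨hdq', b', hbmem', hbd'⟩ := hs'.2.choose_spec
      rw [heq1] at hdq hbd
      -- same q for both rows
      have hwq : P.hq hs'.2.choose ≤ P.δ (l+1) := hdq'.2.1.1
      have hR2S : P.R = 2 * P.S := rfl
      have h1 : 2*s + 1 ≤ P.R := by omega
      have h1' : 2*s' + 1 ≤ P.R := by omega
      have hcl := P.rowBad_same_q hwq h1 h1' hbmem hbmem' hbd hbd'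
      omega
    have hc := Finset.card_le_card_of_injOn f hmaps hinj
    have : (({A, B} : Finset ℤ) ×ˢ Finset.range 3).card ≤ 6 := by
      rw [Finset.card_product, Finset.card_range]
      have : ({A, B} : Finset ℤ).card ≤ 2 := Finset.card_insert_le A {B} |>.trans (by simp)
      omega
    omega
  have hsplit := Finset.card_filter_add_card_filter_not
    (s := Finset.range P.S) (p := fun s => P.rowBad l c (2 * s))
  rw [Finset.card_range] at hsplit
  have hm : P.m = P.S - 6 := rfl
  have hgr : (P.goodRowsS l c).card =
      ((Finset.range P.S).filter (fun s => ¬ P.rowBad l c (2 * s))).card := by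
    simp only [goodRowsS]
  omega

/-- selected rows: `rsel l c k` is an even good row index. -/
noncomputable def rsel (l : ℕ) (c : ℝ × ℝ) (k : Fin P.m) : ℕ :=
  2 * ((P.goodRowsS l c).orderEmbOfCardLe (P.goodRowsS_card l c) k)

lemma rsel_mem (l : ℕ) (c : ℝ × ℝ) (k : Fin P.m) :
    (P.rsel l c k) / 2 ∈ P.goodRowsS l c := by
  have := Finset.orderEmbOfCardLe_mem (P.goodRowsS l c) (P.goodRowsS_card l c) k
  simpa [rsel] using this

lemma rsel_spec (l : ℕ) (c : ℝ × ℝ) (k : Fin P.m) :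
    ((P.rsel l c k) / 2 < P.S ∧ ¬ P.rowBad l c (P.rsel l c k)) ∧ 2 ∣ P.rsel l c k := by
  have hmem := P.rsel_mem l c k
  have h2 : 2 ∣ P.rsel l c k := ⟨_, rfl⟩
  classical
  simp only [goodRowsS, Finset.mem_filter, Finset.mem_range] at hmem
  refine ⟨⟨hmem.1, ?_⟩, h2⟩
  have : 2 * (P.rsel l c k / 2) = P.rsel l c k := by
    omega
  rw [← this]
  exact hmem.2

lemma rsel_lt (l : ℕ) (c : ℝ × ℝ) (k : Fin P.m) : P.rsel l c k + 1 ≤ P.R := by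
  have := (P.rsel_spec l c k).1.1
  have h2 := (P.rsel_spec l c k).2
  have : P.rsel l c k < 2 * P.S := by omega
  simp only [R]
  omega

lemma rsel_inj (l : ℕ) (c : ℝ × ℝ) {k k' : Fin P.m} (h : k ≠ k') :
    2 ≤ |(P.rsel l c k : ℝ) - (P.rsel l c k' : ℝ)| := by
  have hinj : ((P.goodRowsS l c).orderEmbOfCardLe (P.goodRowsS_card l c) k) ≠
      ((P.goodRowsS l c).orderEmbOfCardLe (P.goodRowsS_card l c) k') := by
    intro hc
    exact h ((Finset.orderEmbOfCardLe (P.goodRowsS l c) (P.goodRowsS_card l c)).injective hc)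
  have hz : (2:ℤ) ≤ |(P.rsel l c k : ℤ) - (P.rsel l c k' : ℤ)| := by
    set E := (P.goodRowsS l c).orderEmbOfCardLe (P.goodRowsS_card l c) with hE
    have hne' : ((E k : ℕ) : ℤ) ≠ ((E k' : ℕ) : ℤ) := by exact_mod_cast hinj
    have h1 : (1:ℤ) ≤ |((E k : ℕ):ℤ) - ((E k':ℕ):ℤ)| := Int.one_le_abs (sub_ne_zero.2 hne')
    have h2 : (P.rsel l c k : ℤ) - (P.rsel l c k' : ℤ) =
        2 * (((E k : ℕ):ℤ) - ((E k':ℕ):ℤ)) := by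
      simp only [rsel, ← hE]
      push_cast
      ring
    rw [h2, abs_mul]
    rw [show |(2:ℤ)| = 2 by norm_num]
    linarith
  calc (2:ℝ) ≤ ((|(P.rsel l c k : ℤ) - (P.rsel l c k' : ℤ)| : ℤ) : ℝ) := by exact_mod_cast hz
    _ = |(P.rsel l c k : ℝ) - (P.rsel l c k' : ℝ)| := by push_cast; ring



-- === chunk 4: the Cantor coding map ===

/-- corners of the nested cells along a digit sequence. -/
noncomputable def cor (σ : ℕ → Fin P.m × Fin P.m) : ℕ → ℝ × ℝ
  | 0 => (0, 0)
  | (l+1) => ((cor σ l).1 + P.δ (l+1) * ((2 * ((σ l).1 : ℕ) : ℕ) : ℝ),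
              (cor σ l).2 + P.δ (l+1) * ((P.rsel l (cor σ l) ((σ l).2) : ℕ) : ℝ))

lemma cor_succ_fst (σ : ℕ → Fin P.m × Fin P.m) (l : ℕ) :
    (P.cor σ (l+1)).1 = (P.cor σ l).1 + P.δ (l+1) * ((2 * ((σ l).1 : ℕ) : ℕ) : ℝ) := rfl

lemma cor_succ_snd (σ : ℕ → Fin P.m × Fin P.m) (l : ℕ) :
    (P.cor σ (l+1)).2 = (P.cor σ l).2 +
      P.δ (l+1) * ((P.rsel l (P.cor σ l) ((σ l).2) : ℕ) : ℝ) := rfl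

lemma cor_prefix (σ τ : ℕ → Fin P.m × Fin P.m) (l : ℕ) (h : ∀ t < l, σ t = τ t) :
    P.cor σ l = P.cor τ l := by
  induction l with
  | zero => rfl
  | succ l ih =>
    have hl : P.cor σ l = P.cor τ l := ih (fun t ht => h t (by omega))
    have hd : σ l = τ l := h l (by omega)
    have e1 := P.cor_succ_fst σ l
    have e2 := P.cor_succ_snd σ l
    have e1' := P.cor_succ_fst τ l
    have e2' := P.cor_succ_snd τ l
    have : P.cor σ (l+1) = ((P.cor σ (l+1)).1, (P.cor σ (l+1)).2) := rfl
    rw [this, e1, e2, hl, hd, ← e1', ← e2']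

lemma step_nonneg (σ : ℕ → Fin P.m × Fin P.m) (l : ℕ) :
    (P.cor σ l).1 ≤ (P.cor σ (l+1)).1 ∧ (P.cor σ l).2 ≤ (P.cor σ (l+1)).2 := by
  have hδ' := P.δ_pos (l+1)
  rw [P.cor_succ_fst, P.cor_succ_snd]
  have h1 : (0:ℝ) ≤ ((2 * ((σ l).1 : ℕ) : ℕ) : ℝ) := Nat.cast_nonneg _
  have h2 : (0:ℝ) ≤ ((P.rsel l (P.cor σ l) ((σ l).2) : ℕ) : ℝ) := Nat.cast_nonneg _
  constructor <;> nlinarith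

lemma step_le (σ : ℕ → Fin P.m × Fin P.m) (l : ℕ) :
    (P.cor σ (l+1)).1 ≤ (P.cor σ l).1 + ((P.R : ℝ) - 1) * P.δ (l+1) ∧
    (P.cor σ (l+1)).2 ≤ (P.cor σ l).2 + ((P.R : ℝ) - 1) * P.δ (l+1) := by
  have hδ' := P.δ_pos (l+1)
  have hS := P.hS
  have hcol : (2 * ((σ l).1 : ℕ)) + 1 ≤ P.R := by
    have := (σ l).1.2
    simp only [m, R] at *
    omega
  have hrow : (P.rsel l (P.cor σ l) ((σ l).2)) + 1 ≤ P.R := P.rsel_lt l _ _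
  rw [P.cor_succ_fst, P.cor_succ_snd]
  constructor
  · have : ((2 * ((σ l).1 : ℕ) : ℕ) : ℝ) ≤ (P.R : ℝ) - 1 := by
      have : ((2 * ((σ l).1 : ℕ) : ℕ) : ℝ) + 1 ≤ (P.R : ℝ) := by exact_mod_cast hcol
      linarith
    nlinarith
  · have : ((P.rsel l (P.cor σ l) ((σ l).2) : ℕ) : ℝ) ≤ (P.R : ℝ) - 1 := by
      have : ((P.rsel l (P.cor σ l) ((σ l).2) : ℕ) : ℝ) + 1 ≤ (P.R : ℝ) := by exact_mod_cast hrow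
      linarith
    nlinarith

lemma cor_range (σ : ℕ → Fin P.m × Fin P.m) (l t : ℕ) :
    (P.cor σ l).1 ≤ (P.cor σ (l+t)).1 ∧ (P.cor σ (l+t)).1 ≤ (P.cor σ l).1 + (P.δ l - P.δ (l+t)) ∧
    (P.cor σ l).2 ≤ (P.cor σ (l+t)).2 ∧ (P.cor σ (l+t)).2 ≤ (P.cor σ l).2 + (P.δ l - P.δ (l+t)) := by
  induction t with
  | zero => simp
  | succ t ih =>
    have hstep1 := P.step_nonneg σ (l+t)
    have hstep2 := P.step_le σ (l+t)
    have hkey : ((P.R : ℝ) - 1) * P.δ (l+t+1) = P.δ (l+t) - P.δ (l+t+1) := by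
      have := P.δ_succ (l+t)
      have hR0 : (0:ℝ) < (P.R:ℝ) := P.hRr0
      rw [this]
      field_simp
    have e1 : l + (t+1) = (l+t)+1 := by omega
    rw [e1]
    refine ⟨le_trans ih.1 hstep1.1, ?_, le_trans ih.2.2.1 hstep1.2, ?_⟩
    · calc (P.cor σ ((l+t)+1)).1 ≤ (P.cor σ (l+t)).1 + ((P.R : ℝ) - 1) * P.δ (l+t+1) := hstep2.1
        _ ≤ (P.cor σ l).1 + (P.δ l - P.δ (l+t)) + (P.δ (l+t) - P.δ (l+t+1)) := by
            rw [hkey] at *; linarith [ih.2.1]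
        _ = (P.cor σ l).1 + (P.δ l - P.δ ((l+t)+1)) := by ring_nf
    · calc (P.cor σ ((l+t)+1)).2 ≤ (P.cor σ (l+t)).2 + ((P.R : ℝ) - 1) * P.δ (l+t+1) := hstep2.2
        _ ≤ (P.cor σ l).2 + (P.δ l - P.δ (l+t)) + (P.δ (l+t) - P.δ (l+t+1)) := by
            rw [hkey] at *; linarith [ih.2.2.2]
        _ = (P.cor σ l).2 + (P.δ l - P.δ ((l+t)+1)) := by ring_nf

lemma cor_cauchy (σ : ℕ → Fin P.m × Fin P.m) : CauchySeq (P.cor σ) := by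
  apply cauchySeq_of_le_geometric ((P.R:ℝ))⁻¹ ((P.R:ℝ) / 4)
  · rw [inv_lt_one_iff₀]
    right
    linarith [P.hRr]
  · intro n
    have h1 := P.step_nonneg σ n
    have h2 := P.step_le σ n
    have hδ' : P.δ (n+1) = ((P.R:ℝ))⁻¹ ^ (n+1) / 4 := by
      simp only [δ, inv_pow]
    have hδn : ((P.R : ℝ) - 1) * P.δ (n+1) ≤ (P.R:ℝ)/4 * ((P.R:ℝ))⁻¹ ^ n := by
      rw [hδ', pow_succ]
      have hR0 : (0:ℝ) < (P.R:ℝ) := P.hRr0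
      have hp : (0:ℝ) < ((P.R:ℝ))⁻¹ ^ n := by positivity
      have hkey : ((P.R:ℝ) - 1) * ((P.R:ℝ))⁻¹ ≤ 1 := by
        rw [sub_mul, mul_inv_cancel₀ (ne_of_gt hR0)]
        have : (0:ℝ) < ((P.R:ℝ))⁻¹ := by positivity
        linarith
      nlinarith [mul_le_mul_of_nonneg_right hkey (le_of_lt hp), P.hRr]
    rw [Prod.dist_eq]
    apply max_le
    · rw [Real.dist_eq, abs_le]
      constructor <;> nlinarith [h1.1, h2.1, P.δ_pos (n+1)]
    · rw [Real.dist_eq, abs_le]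
      constructor <;> nlinarith [h1.2, h2.2, P.δ_pos (n+1)]

noncomputable def F (σ : ℕ → Fin P.m × Fin P.m) : ℝ × ℝ :=
  (cauchySeq_tendsto_of_complete (P.cor_cauchy σ)).choose

lemma F_tendsto (σ : ℕ → Fin P.m × Fin P.m) :
    Filter.Tendsto (P.cor σ) Filter.atTop (nhds (P.F σ)) :=
  (cauchySeq_tendsto_of_complete (P.cor_cauchy σ)).choose_spec

lemma F_mem (σ : ℕ → Fin P.m × Fin P.m) (l : ℕ) :
    (P.cor σ l).1 ≤ (P.F σ).1 ∧ (P.F σ).1 ≤ (P.cor σ l).1 + P.δ l ∧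
    (P.cor σ l).2 ≤ (P.F σ).2 ∧ (P.F σ).2 ≤ (P.cor σ l).2 + P.δ l := by
  have h1 : Filter.Tendsto (fun n => (P.cor σ n).1) Filter.atTop (nhds (P.F σ).1) :=
    (continuous_fst.tendsto _).comp (P.F_tendsto σ)
  have h2 : Filter.Tendsto (fun n => (P.cor σ n).2) Filter.atTop (nhds (P.F σ).2) :=
    (continuous_snd.tendsto _).comp (P.F_tendsto σ)
  have hev : ∀ n ≥ l, (P.cor σ l).1 ≤ (P.cor σ n).1 ∧ (P.cor σ n).1 ≤ (P.cor σ l).1 + P.δ l ∧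
      (P.cor σ l).2 ≤ (P.cor σ n).2 ∧ (P.cor σ n).2 ≤ (P.cor σ l).2 + P.δ l := by
    intro n hn
    obtain ⟨t, rfl⟩ : ∃ t, n = l + t := ⟨n - l, by omega⟩
    have := P.cor_range σ l t
    have hδt := P.δ_pos (l+t)
    exact ⟨this.1, by linarith [this.2.1], this.2.2.1, by linarith [this.2.2.2]⟩
  refine ⟨?_, ?_, ?_, ?_⟩
  · exact ge_of_tendsto h1 (Filter.eventually_atTop.2 ⟨l, fun n hn => (hev n hn).1⟩)
  · exact le_of_tendsto h1 (Filter.eventually_atTop.2 ⟨l, fun n hn => (hev n hn).2.1⟩)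
  · exact ge_of_tendsto h2 (Filter.eventually_atTop.2 ⟨l, fun n hn => (hev n hn).2.2.1⟩)
  · exact le_of_tendsto h2 (Filter.eventually_atTop.2 ⟨l, fun n hn => (hev n hn).2.2.2⟩)

lemma exists_window {q : ℤ} (hq0 : q ≠ 0) : ∃ l, P.Win l q := by
  have hqpos := P.hq_pos hq0
  obtain ⟨n, hn⟩ : ∃ n, P.δ (n + 2) < P.hq q := by
    obtain ⟨n, hn⟩ := exists_pow_lt_of_lt_one hqpos
      (by rw [inv_lt_one_iff₀]; right; linarith [P.hRr] : ((P.R:ℝ))⁻¹ < 1)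
    refine ⟨n, lt_of_le_of_lt ?_ hn⟩
    have hR0 : (0:ℝ) < (P.R:ℝ) := P.hRr0
    have h1 : ((P.R:ℝ))⁻¹ ^ (n+2) ≤ ((P.R:ℝ))⁻¹ ^ n := by
      apply pow_le_pow_of_le_one (by positivity) ?_ (by omega)
      rw [inv_le_one_iff₀]
      right
      linarith [P.hRr]
    have h2 : P.δ (n+2) = ((P.R:ℝ))⁻¹ ^ (n+2) / 4 := by simp [δ, inv_pow]
    rw [h2]
    nlinarith [pow_nonneg (by positivity : (0:ℝ) ≤ ((P.R:ℝ))⁻¹) n]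
  classical
  have hex : ∃ l, P.δ (l + 2) < P.hq q := ⟨n, hn⟩
  set l := Nat.find hex with hldef
  have hl : P.δ (l + 2) < P.hq q := Nat.find_spec hex
  refine ⟨l, ?_, hl⟩
  rcases Nat.eq_zero_or_pos l with h0 | hpos
  · rw [h0]
    have h1 : P.hq q ≤ P.e := by
      have : |(q:ℝ)| ^ (-P.j) ≤ 1 :=
        Real.rpow_le_one_of_one_le_of_nonpos (one_le_abs_q hq0) (by linarith [P.hj0])
      simp only [hq]
      nlinarith [P.e_pos]
    exact le_trans h1 P.e_le_δ1
  · obtain ⟨l', hleq⟩ : ∃ l', l = l' + 1 := ⟨l - 1, by omega⟩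
    have hmin := Nat.find_min hex (show l' < l by omega)
    push_neg at hmin
    have heq : l + 1 = l' + 2 := by omega
    rw [heq]
    exact hmin

/-- the crucial safety property: points of the Cantor set avoid all dangerous
rectangles. -/
lemma F_safe (σ : ℕ → Fin P.m × Fin P.m) {q : ℤ} (hq0 : q ≠ 0) :
    P.wq q ≤ dni ((q:ℝ) * P.x₁ - (P.F σ).1) ∨ P.hq q ≤ dni ((q:ℝ) * P.x₂ - (P.F σ).2) := by
  by_contra hcon
  push_neg at hcon
  obtain ⟨hx1, hx2⟩ := hcon
  obtain ⟨l, hwin⟩ := P.exists_window hq0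
  have hmem := P.F_mem σ l
  have hmem' := P.F_mem σ (l+1)
  have hdng : P.Dng l (P.cor σ l) q :=
    ⟨hq0, hwin, (P.F σ).1, (P.F σ).2, ⟨hmem.1, hmem.2.1⟩, ⟨hmem.2.2.1, hmem.2.2.2⟩, hx1, hx2⟩
  set t := P.rsel l (P.cor σ l) ((σ l).2) with hts
  have hrow : (P.F σ).2 ∈ Icc ((P.cor σ l).2 + (t:ℝ) * P.δ (l+1))
      ((P.cor σ l).2 + ((t:ℝ)+1) * P.δ (l+1)) := by
    have hc : (P.cor σ (l+1)).2 = (P.cor σ l).2 + P.δ (l+1) * (t:ℝ) := rfl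
    constructor
    · have h := hmem'.2.2.1
      rw [hc] at h
      linarith
    · have h := hmem'.2.2.2
      rw [hc] at h
      linarith
  have hbad : P.rowBad l (P.cor σ l) t := ⟨q, hdng, (P.F σ).2, hrow, hx2⟩
  exact (P.rsel_spec l (P.cor σ l) ((σ l).2)).1.2 hbad

/-- separation of distinct coded points. -/
lemma F_apart {σ τ : ℕ → Fin P.m × Fin P.m} {l : ℕ}
    (hpre : ∀ t < l, σ t = τ t) (hne : σ l ≠ τ l) :
    P.δ (l+1) ≤ dist (P.F σ) (P.F τ) := by
  have hδ' := P.δ_pos (l+1)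
  have hcor : P.cor σ l = P.cor τ l := P.cor_prefix σ τ l hpre
  have hmemσ := P.F_mem σ (l+1)
  have hmemτ := P.F_mem τ (l+1)
  have hfinal : ∀ u v uc vc : ℝ, 2 * P.δ (l+1) ≤ |uc - vc| →
      uc ≤ u → u ≤ uc + P.δ (l+1) → vc ≤ v → v ≤ vc + P.δ (l+1) →
      P.δ (l+1) ≤ |u - v| := by
    intro u v uc vc hsep h1 h2 h3 h4
    rcases abs_cases (uc - vc) with ⟨e,_⟩|⟨e,_⟩ <;> rcases abs_cases (u - v) with ⟨f,_⟩|⟨f,_⟩ <;>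
      rw [e] at hsep <;> rw [f] <;> linarith
  rw [Prod.dist_eq]
  by_cases hfst : (σ l).1 = (τ l).1
  · have hsnd : (σ l).2 ≠ (τ l).2 := fun h2 => hne (Prod.ext hfst h2)
    have hsel := P.rsel_inj l (P.cor σ l) hsnd
    have hc1 : (P.cor σ (l+1)).2 =
        (P.cor σ l).2 + P.δ (l+1) * (P.rsel l (P.cor σ l) ((σ l).2) : ℝ) := rfl
    have hc2 : (P.cor τ (l+1)).2 =
        (P.cor σ l).2 + P.δ (l+1) * (P.rsel l (P.cor σ l) ((τ l).2) : ℝ) := by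
      have h0 : (P.cor τ (l+1)).2 =
          (P.cor τ l).2 + P.δ (l+1) * (P.rsel l (P.cor τ l) ((τ l).2) : ℝ) := rfl
      rw [h0, ← hcor]
    have hgap : 2 * P.δ (l+1) ≤ |(P.cor σ (l+1)).2 - (P.cor τ (l+1)).2| := by
      rw [hc1, hc2]
      have heq : (P.cor σ l).2 + P.δ (l+1) * (P.rsel l (P.cor σ l) ((σ l).2) : ℝ) -
          ((P.cor σ l).2 + P.δ (l+1) * (P.rsel l (P.cor σ l) ((τ l).2) : ℝ)) =
          P.δ (l+1) * ((P.rsel l (P.cor σ l) ((σ l).2) : ℝ) -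
            (P.rsel l (P.cor σ l) ((τ l).2) : ℝ)) := by ring
      rw [heq, abs_mul, abs_of_pos hδ']
      nlinarith [hsel]
    have hres := hfinal (P.F σ).2 (P.F τ).2 _ _ hgap
      hmemσ.2.2.1 hmemσ.2.2.2 hmemτ.2.2.1 hmemτ.2.2.2
    calc P.δ (l+1) ≤ |(P.F σ).2 - (P.F τ).2| := hres
      _ = dist (P.F σ).2 (P.F τ).2 := (Real.dist_eq _ _).symm
      _ ≤ max (dist (P.F σ).1 (P.F τ).1) (dist (P.F σ).2 (P.F τ).2) := le_max_right _ _
  · have hane : ((σ l).1 : ℕ) ≠ ((τ l).1 : ℕ) := fun h => hfst (Fin.ext h)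
    have hz : (2:ℤ) ≤ |((2 * ((σ l).1:ℕ) : ℕ) : ℤ) - ((2 * ((τ l).1:ℕ) : ℕ) : ℤ)| := by
      have hne' : (((σ l).1:ℕ) : ℤ) ≠ (((τ l).1:ℕ) : ℤ) := by exact_mod_cast hane
      have h1 : (1:ℤ) ≤ |(((σ l).1:ℕ):ℤ) - (((τ l).1:ℕ):ℤ)| :=
        Int.one_le_abs (sub_ne_zero.2 hne')
      have h2 : ((2 * ((σ l).1:ℕ) : ℕ) : ℤ) - ((2 * ((τ l).1:ℕ) : ℕ) : ℤ) =
          2 * ((((σ l).1:ℕ):ℤ) - (((τ l).1:ℕ):ℤ)) := by push_cast; ring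
      rw [h2, abs_mul, show |(2:ℤ)| = 2 by norm_num]
      linarith
    have hcolsep : (2:ℝ) ≤ |((2 * ((σ l).1:ℕ) : ℕ) : ℝ) - ((2 * ((τ l).1:ℕ) : ℕ) : ℝ)| := by
      calc (2:ℝ) ≤ ((|((2 * ((σ l).1:ℕ) : ℕ) : ℤ) - ((2 * ((τ l).1:ℕ) : ℕ) : ℤ)| : ℤ) : ℝ) := by
            exact_mod_cast hz
        _ = _ := by push_cast; ring
    have hc1 : (P.cor σ (l+1)).1 =
        (P.cor σ l).1 + P.δ (l+1) * ((2 * ((σ l).1:ℕ) : ℕ) : ℝ) := rfl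
    have hc2 : (P.cor τ (l+1)).1 =
        (P.cor σ l).1 + P.δ (l+1) * ((2 * ((τ l).1:ℕ) : ℕ) : ℝ) := by
      have h0 : (P.cor τ (l+1)).1 =
          (P.cor τ l).1 + P.δ (l+1) * ((2 * ((τ l).1:ℕ) : ℕ) : ℝ) := rfl
      rw [h0, ← hcor]
    have hgap : 2 * P.δ (l+1) ≤ |(P.cor σ (l+1)).1 - (P.cor τ (l+1)).1| := by
      rw [hc1, hc2]
      have heq : (P.cor σ l).1 + P.δ (l+1) * ((2 * ((σ l).1:ℕ) : ℕ) : ℝ) -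
          ((P.cor σ l).1 + P.δ (l+1) * ((2 * ((τ l).1:ℕ) : ℕ) : ℝ)) =
          P.δ (l+1) * (((2 * ((σ l).1:ℕ) : ℕ) : ℝ) - ((2 * ((τ l).1:ℕ) : ℕ) : ℝ)) := by ring
      rw [heq, abs_mul, abs_of_pos hδ']
      nlinarith [hcolsep]
    have hres := hfinal (P.F σ).1 (P.F τ).1 _ _ hgap
      hmemσ.1 hmemσ.2.1 hmemτ.1 hmemτ.2.1
    calc P.δ (l+1) ≤ |(P.F σ).1 - (P.F τ).1| := hres
      _ = dist (P.F σ).1 (P.F τ).1 := (Real.dist_eq _ _).symm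
      _ ≤ max (dist (P.F σ).1 (P.F τ).1) (dist (P.F σ).2 (P.F τ).2) := le_max_left _ _

lemma F_inj : Function.Injective P.F := by
  intro σ τ h
  by_contra hne
  have hex : ∃ l, σ l ≠ τ l := by
    by_contra hc
    push_neg at hc
    exact hne (funext hc)
  classical
  let l := Nat.find hex
  have hl : σ l ≠ τ l := Nat.find_spec hex
  have hpre : ∀ t < l, σ t = τ t := by
    intro t ht
    by_contra hc
    exact absurd (Nat.find_min hex ht) (by simp [hc])
  have := P.F_apart hpre hl
  rw [h, dist_self] at this
  linarith [P.δ_pos (l+1)]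

-- === chunk 5: digit value maps ===

lemma hm2 : 2 ≤ P.m := by have := P.hS; simp only [m]; omega

lemma hmr : (2:ℝ) ≤ (P.m : ℝ) := by exact_mod_cast P.hm2

lemma hmr0 : (0:ℝ) < (P.m : ℝ) := by linarith [P.hmr]

lemma hminv_lt_one : ((P.m : ℝ))⁻¹ < 1 := by
  rw [inv_lt_one_iff₀]; right; linarith [P.hmr]

lemma hminv_nonneg : (0:ℝ) ≤ ((P.m : ℝ))⁻¹ := by positivity

noncomputable def val1 (d : ℕ → Fin P.m) : ℝ := ∑' t : ℕ, (d t : ℝ) * ((P.m : ℝ))⁻¹ ^ (t+1)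

lemma val1_summable (d : ℕ → Fin P.m) :
    Summable (fun t => (d t : ℝ) * ((P.m : ℝ))⁻¹ ^ (t+1)) := by
  apply Summable.of_nonneg_of_le (fun t => by positivity) (fun t => ?_)
    (summable_geometric_of_lt_one P.hminv_nonneg P.hminv_lt_one)
  have h1 : ((d t : ℕ) : ℝ) ≤ (P.m : ℝ) := by
    have := (d t).2
    exact_mod_cast le_of_lt this
  have h2 : (0:ℝ) ≤ ((P.m : ℝ))⁻¹ ^ t := by positivity
  have h3 : ((P.m:ℝ))⁻¹ ^ (t+1) = ((P.m:ℝ))⁻¹ ^ t * ((P.m:ℝ))⁻¹ := pow_succ _ _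
  rw [h3]
  have hm0 := P.hmr0
  calc (d t : ℝ) * (((P.m:ℝ))⁻¹ ^ t * ((P.m:ℝ))⁻¹) ≤
      (P.m : ℝ) * (((P.m:ℝ))⁻¹ ^ t * ((P.m:ℝ))⁻¹) := by
        apply mul_le_mul_of_nonneg_right h1
        positivity
    _ = ((P.m:ℝ))⁻¹ ^ t := by field_simp
    _ = _ := rfl

/-- tail estimate for the digit value map. -/
lemma val1_tail (d : ℕ → Fin P.m) (l : ℕ) :
    0 ≤ ∑' t : ℕ, (d (t+l) : ℝ) * ((P.m : ℝ))⁻¹ ^ (t+l+1) ∧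
    ∑' t : ℕ, (d (t+l) : ℝ) * ((P.m : ℝ))⁻¹ ^ (t+l+1) ≤ 2 * ((P.m : ℝ))⁻¹ ^ l := by
  have hsum : Summable (fun t => (d (t+l) : ℝ) * ((P.m : ℝ))⁻¹ ^ (t+l+1)) :=
    ((P.val1_summable d).comp_injective (add_left_injective l)).congr (fun t => rfl)
  constructor
  · exact tsum_nonneg (fun t => by positivity)
  · have hgeo : Summable (fun t : ℕ => ((P.m : ℝ))⁻¹ ^ l * ((P.m:ℝ))⁻¹ ^ t) :=
      (summable_geometric_of_lt_one P.hminv_nonneg P.hminv_lt_one).mul_left _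
    have hle : ∀ t : ℕ, (d (t+l) : ℝ) * ((P.m : ℝ))⁻¹ ^ (t+l+1) ≤
        ((P.m : ℝ))⁻¹ ^ l * ((P.m:ℝ))⁻¹ ^ t := by
      intro t
      have h1 : ((d (t+l) : ℕ) : ℝ) ≤ (P.m : ℝ) := by
        exact_mod_cast le_of_lt (d (t+l)).2
      have hm0 := P.hmr0
      have heq : ((P.m:ℝ))⁻¹ ^ (t+l+1) = ((P.m:ℝ))⁻¹ ^ l * ((P.m:ℝ))⁻¹ ^ t * ((P.m:ℝ))⁻¹ := by
        rw [← pow_add, ← pow_succ]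
        ring_nf
      rw [heq]
      calc (d (t+l) : ℝ) * (((P.m:ℝ))⁻¹ ^ l * ((P.m:ℝ))⁻¹ ^ t * ((P.m:ℝ))⁻¹) ≤
          (P.m:ℝ) * (((P.m:ℝ))⁻¹ ^ l * ((P.m:ℝ))⁻¹ ^ t * ((P.m:ℝ))⁻¹) := by
            apply mul_le_mul_of_nonneg_right h1
            positivity
        _ = ((P.m:ℝ))⁻¹ ^ l * ((P.m:ℝ))⁻¹ ^ t := by field_simp
    calc ∑' t : ℕ, (d (t+l) : ℝ) * ((P.m : ℝ))⁻¹ ^ (t+l+1) ≤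
        ∑' t : ℕ, ((P.m : ℝ))⁻¹ ^ l * ((P.m:ℝ))⁻¹ ^ t := hsum.tsum_le_tsum hle hgeo
      _ = ((P.m : ℝ))⁻¹ ^ l * (1 - ((P.m:ℝ))⁻¹)⁻¹ := by
          rw [tsum_mul_left, tsum_geometric_of_lt_one P.hminv_nonneg P.hminv_lt_one]
      _ ≤ 2 * ((P.m : ℝ))⁻¹ ^ l := by
          have h1 : (1 - ((P.m:ℝ))⁻¹)⁻¹ ≤ 2 := by
            have hm0 := P.hmr0
            have h2 : ((P.m:ℝ))⁻¹ ≤ 1/2 := by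
              rw [inv_le_comm₀ hm0 (by norm_num)]
              linarith [P.hmr]
            rw [inv_le_comm₀ (by linarith) (by norm_num)]
            linarith
          have h3 : (0:ℝ) ≤ ((P.m:ℝ))⁻¹ ^ l := by positivity
          nlinarith

lemma val1_diff {d d' : ℕ → Fin P.m} (l : ℕ) (hpre : ∀ t < l, d t = d' t) :
    |P.val1 d - P.val1 d'| ≤ 4 * ((P.m : ℝ))⁻¹ ^ l := by
  have hs := P.val1_summable d
  have hs' := P.val1_summable d'
  have hsplit := Summable.sum_add_tsum_nat_add l hs
  have hsplit' := Summable.sum_add_tsum_nat_add l hs'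
  have hfin : ∑ t ∈ Finset.range l, (d t : ℝ) * ((P.m : ℝ))⁻¹ ^ (t+1) =
      ∑ t ∈ Finset.range l, (d' t : ℝ) * ((P.m : ℝ))⁻¹ ^ (t+1) := by
    apply Finset.sum_congr rfl
    intro t ht
    rw [hpre t (Finset.mem_range.1 ht)]
  have ht1 := P.val1_tail d l
  have ht2 := P.val1_tail d' l
  have he : P.val1 d - P.val1 d' =
      (∑' t : ℕ, (d (t+l) : ℝ) * ((P.m : ℝ))⁻¹ ^ (t+l+1)) -
      (∑' t : ℕ, (d' (t+l) : ℝ) * ((P.m : ℝ))⁻¹ ^ (t+l+1)) := by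
    simp only [val1]
    rw [← hsplit, ← hsplit', hfin]
    ring
  rw [he, abs_le]
  constructor <;> nlinarith [ht1.1, ht1.2, ht2.1, ht2.2]

/-- every point of `[0,1)` has a digit expansion. -/
lemma exists_digits (y : ℝ) (hy : y ∈ Ico (0:ℝ) 1) : ∃ d : ℕ → Fin P.m, P.val1 d = y := by
  have hm0 := P.hmr0
  have hm1 : (1:ℝ) < (P.m : ℝ) := by linarith [P.hmr]
  -- integer digits
  have hdig : ∀ L : ℕ, 0 ≤ ⌊y * (P.m:ℝ)^(L+1)⌋ - P.m * ⌊y * (P.m:ℝ)^L⌋ ∧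
      ⌊y * (P.m:ℝ)^(L+1)⌋ - P.m * ⌊y * (P.m:ℝ)^L⌋ < P.m := by
    intro L
    have hp : (0:ℝ) < (P.m:ℝ)^L := by positivity
    constructor
    · have h1 : ((P.m : ℤ) : ℝ) * ⌊y * (P.m:ℝ)^L⌋ ≤ y * (P.m:ℝ)^(L+1) := by
        have := Int.floor_le (y * (P.m:ℝ)^L)
        calc ((P.m : ℤ) : ℝ) * ⌊y * (P.m:ℝ)^L⌋ ≤ (P.m:ℝ) * (y * (P.m:ℝ)^L) := by
              push_cast
              nlinarith
          _ = y * (P.m:ℝ)^(L+1) := by ring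
      have h2 : (P.m : ℤ) * ⌊y * (P.m:ℝ)^L⌋ ≤ ⌊y * (P.m:ℝ)^(L+1)⌋ := by
        apply Int.le_floor.2
        push_cast
        push_cast at h1
        linarith
      omega
    · have h1 : y * (P.m:ℝ)^(L+1) < ((P.m : ℤ) : ℝ) * ⌊y * (P.m:ℝ)^L⌋ + (P.m:ℝ) := by
        have := Int.lt_floor_add_one (y * (P.m:ℝ)^L)
        calc y * (P.m:ℝ)^(L+1) = (P.m:ℝ) * (y * (P.m:ℝ)^L) := by ring
          _ < (P.m:ℝ) * (⌊y * (P.m:ℝ)^L⌋ + 1) := by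
              apply mul_lt_mul_of_pos_left this hm0
          _ = ((P.m : ℤ) : ℝ) * ⌊y * (P.m:ℝ)^L⌋ + (P.m:ℝ) := by push_cast; ring
      have h2 : ⌊y * (P.m:ℝ)^(L+1)⌋ < (P.m : ℤ) * ⌊y * (P.m:ℝ)^L⌋ + P.m := by
        apply Int.floor_lt.2
        calc y * (P.m:ℝ)^(L+1) < ((P.m : ℤ) : ℝ) * ⌊y * (P.m:ℝ)^L⌋ + (P.m:ℝ) := h1
          _ = (((P.m : ℤ) * ⌊y * (P.m:ℝ)^L⌋ + P.m : ℤ) : ℝ) := by push_cast; ring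
      omega
  refine ⟨fun L => ⟨(⌊y * (P.m:ℝ)^(L+1)⌋ - P.m * ⌊y * (P.m:ℝ)^L⌋).toNat, ?_⟩, ?_⟩
  · have := hdig L
    omega
  · -- partial sums equal ⌊y m^L⌋ / m^L
    have hfloor0 : ⌊y⌋ = 0 := Int.floor_eq_zero_iff.2 hy
    have hpartial : ∀ L : ℕ, ∑ t ∈ Finset.range L,
        (((⌊y * (P.m:ℝ)^(t+1)⌋ - P.m * ⌊y * (P.m:ℝ)^t⌋).toNat : ℝ)) * ((P.m : ℝ))⁻¹ ^ (t+1) =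
        (⌊y * (P.m:ℝ)^L⌋ : ℝ) / (P.m:ℝ)^L := by
      intro L
      induction L with
      | zero => simp [hfloor0]
      | succ L ih =>
        rw [Finset.sum_range_succ, ih]
        have hd := hdig L
        have hcast0 : (((⌊y * (P.m:ℝ)^(L+1)⌋ - P.m * ⌊y * (P.m:ℝ)^L⌋).toNat : ℕ) : ℝ) =
            ((⌊y * (P.m:ℝ)^(L+1)⌋ - P.m * ⌊y * (P.m:ℝ)^L⌋ : ℤ) : ℝ) := by
          exact_mod_cast congrArg (Int.cast : ℤ → ℝ) (Int.toNat_of_nonneg hd.1)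
        have hcast : (((⌊y * (P.m:ℝ)^(L+1)⌋ - P.m * ⌊y * (P.m:ℝ)^L⌋).toNat : ℕ) : ℝ) =
            (⌊y * (P.m:ℝ)^(L+1)⌋ : ℝ) - (P.m : ℝ) * (⌊y * (P.m:ℝ)^L⌋ : ℝ) := by
          rw [hcast0]
          push_cast
          ring
        rw [hcast]
        have hpL : ((P.m:ℝ))^L ≠ 0 := by positivity
        have hpL1 : ((P.m:ℝ))^(L+1) ≠ 0 := by positivity
        have hm0' : (P.m:ℝ) ≠ 0 := ne_of_gt hm0
        rw [inv_pow]
        field_simp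
        ring
    -- limit
    have hlim : Filter.Tendsto (fun L => (⌊y * (P.m:ℝ)^L⌋ : ℝ) / (P.m:ℝ)^L)
        Filter.atTop (nhds y) := by
      have hbound : ∀ L : ℕ, |(⌊y * (P.m:ℝ)^L⌋ : ℝ) / (P.m:ℝ)^L - y| ≤ ((P.m:ℝ))⁻¹ ^ L := by
        intro L
        have hp : (0:ℝ) < (P.m:ℝ)^L := by positivity
        have h1 := Int.floor_le (y * (P.m:ℝ)^L)
        have h2 := Int.lt_floor_add_one (y * (P.m:ℝ)^L)
        have hone : ((P.m:ℝ))⁻¹ ^ L * (P.m:ℝ)^L = 1 := by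
          rw [inv_pow]
          field_simp
        rw [abs_le]
        constructor
        · have hlow : (y - ((P.m:ℝ))⁻¹ ^ L) ≤ (⌊y * (P.m:ℝ)^L⌋ : ℝ) / (P.m:ℝ)^L := by
            rw [le_div_iff₀ hp]
            nlinarith [hone, h2]
          linarith
        · rw [sub_le_iff_le_add, div_le_iff₀ hp]
          nlinarith [hone, h1]
      have hgeo : Filter.Tendsto (fun L : ℕ => ((P.m:ℝ))⁻¹ ^ L) Filter.atTop (nhds 0) :=
        tendsto_pow_atTop_nhds_zero_of_lt_one P.hminv_nonneg P.hminv_lt_one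
      rw [Metric.tendsto_atTop]
      intro η hη
      rw [Metric.tendsto_atTop] at hgeo
      obtain ⟨N, hN⟩ := hgeo (η/2) (by linarith)
      refine ⟨N, fun n hn => ?_⟩
      have := hbound n
      have h2 := hN n hn
      rw [Real.dist_eq] at *
      have h3 : |((P.m:ℝ))⁻¹ ^ n - 0| = ((P.m:ℝ))⁻¹ ^ n := by
        rw [sub_zero, abs_of_nonneg (by positivity)]
      rw [h3] at h2
      calc |(⌊y * (P.m:ℝ)^n⌋ : ℝ) / (P.m:ℝ)^n - y| ≤ ((P.m:ℝ))⁻¹ ^ n := this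
        _ < η := by linarith
    have hsum := P.val1_summable (fun L =>
      (⟨(⌊y * (P.m:ℝ)^(L+1)⌋ - P.m * ⌊y * (P.m:ℝ)^L⌋).toNat, by have := hdig L; omega⟩ : Fin P.m))
    have := (hsum.hasSum_iff_tendsto_nat).2 (by
      apply hlim.congr
      intro L
      exact (hpartial L).symm)
    exact this.tsum_eq

-- === chunk 6: Hölder map and dimension bound ===

noncomputable def val (σ : ℕ → Fin P.m × Fin P.m) : ℝ × ℝ :=
  (P.val1 (fun l => (σ l).1), P.val1 (fun l => (σ l).2))

open Classical in
noncomputable def g : ℝ × ℝ → ℝ × ℝ :=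
  fun α => if h : ∃ σ, P.F σ = α then P.val h.choose else (0, 0)

lemma g_F (σ : ℕ → Fin P.m × Fin P.m) : P.g (P.F σ) = P.val σ := by
  have h : ∃ τ, P.F τ = P.F σ := ⟨σ, rfl⟩
  classical
  rw [g, dif_pos h]
  congr 1
  exact P.F_inj h.choose_spec

noncomputable def γ : NNReal := Real.toNNReal (Real.log P.m / Real.log P.R)

lemma logm_pos : 0 < Real.log P.m := Real.log_pos (by exact_mod_cast P.hm2)

lemma logR_pos : 0 < Real.log P.R := Real.log_pos (by linarith [P.hRr])

lemma γ_coe : (P.γ : ℝ) = Real.log P.m / Real.log P.R :=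
  Real.coe_toNNReal _ (le_of_lt (div_pos P.logm_pos P.logR_pos))

lemma γ_pos : 0 < P.γ := by
  have : (0:ℝ) < (P.γ : ℝ) := by
    rw [P.γ_coe]
    exact div_pos P.logm_pos P.logR_pos
  exact_mod_cast this

lemma γ_le_one : (P.γ : ℝ) ≤ 1 := by
  rw [P.γ_coe, div_le_one P.logR_pos]
  apply Real.log_le_log P.hmr0
  have h : P.m ≤ P.R := by simp only [m, R]; omega
  exact_mod_cast h

lemma R_rpow_γ : (P.R : ℝ) ^ (P.γ : ℝ) = (P.m : ℝ) := by
  rw [P.γ_coe, Real.rpow_def_of_pos P.hRr0]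
  have h : Real.log (P.R) * (Real.log P.m / Real.log P.R) = Real.log P.m := by
    have h0 : Real.log (P.R:ℝ) ≠ 0 := ne_of_gt P.logR_pos
    field_simp
  rw [h, Real.exp_log P.hmr0]

lemma δ_rpow_γ (l : ℕ) : (4 * (P.m:ℝ) ^ (l+1))⁻¹ ≤ P.δ (l+1) ^ (P.γ : ℝ) := by
  have hR0 := P.hRr0
  have hγ0 : (0:ℝ) ≤ (P.γ : ℝ) := NNReal.coe_nonneg _
  have hδeq : P.δ (l+1) = (4 * (P.R:ℝ) ^ (l+1))⁻¹ := by
    simp only [δ]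
    rw [mul_inv]
    ring
  have hpow : ((P.R:ℝ) ^ (l+1)) ^ (P.γ : ℝ) = (P.m:ℝ) ^ (l+1) := by
    rw [← Real.rpow_natCast (P.R:ℝ) (l+1), ← Real.rpow_mul (le_of_lt hR0),
      mul_comm, Real.rpow_mul (le_of_lt hR0), P.R_rpow_γ, Real.rpow_natCast]
  have h4 : (4:ℝ) ^ (P.γ : ℝ) ≤ 4 := by
    calc (4:ℝ) ^ (P.γ : ℝ) ≤ (4:ℝ) ^ (1:ℝ) :=
          Real.rpow_le_rpow_of_exponent_le (by norm_num) P.γ_le_one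
      _ = 4 := Real.rpow_one _
  have h40 : (0:ℝ) < (4:ℝ) ^ (P.γ : ℝ) := Real.rpow_pos_of_pos (by norm_num) _
  have hm0 : (0:ℝ) < (P.m:ℝ) ^ (l+1) := by
    have := P.hmr0
    positivity
  rw [hδeq, Real.inv_rpow (by positivity),
    Real.mul_rpow (by norm_num) (by positivity), hpow]
  apply inv_anti₀ (by positivity)
  exact mul_le_mul_of_nonneg_right h4 (le_of_lt hm0)

lemma val_dist {σ τ : ℕ → Fin P.m × Fin P.m} (l : ℕ) (hpre : ∀ t < l, σ t = τ t) :
    dist (P.val σ) (P.val τ) ≤ 4 * ((P.m : ℝ))⁻¹ ^ l := by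
  rw [Prod.dist_eq]
  apply max_le <;> rw [Real.dist_eq]
  · exact P.val1_diff l (fun t ht => by rw [hpre t ht])
  · exact P.val1_diff l (fun t ht => by rw [hpre t ht])

lemma holder_g : HolderOnWith (Real.toNNReal (16 * P.m)) P.γ P.g (Set.range P.F) := by
  intro x hx y hy
  obtain ⟨σ, rfl⟩ := hx
  obtain ⟨τ, rfl⟩ := hy
  by_cases hst : σ = τ
  · subst hst
    simp
  · have hex : ∃ l, σ l ≠ τ l := by
      by_contra hc
      push_neg at hc
      exact hst (funext hc)
    classical
    set l := Nat.find hex with hldef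
    have hl : σ l ≠ τ l := Nat.find_spec hex
    have hpre : ∀ t < l, σ t = τ t := by
      intro t ht
      by_contra hc
      exact absurd (Nat.find_min hex ht) (by simp [hc])
    have hv : dist (P.val σ) (P.val τ) ≤ 4 * ((P.m:ℝ))⁻¹ ^ l := P.val_dist l hpre
    have hd : P.δ (l+1) ≤ dist (P.F σ) (P.F τ) := P.F_apart hpre hl
    have hδ0 : (0:ℝ) < P.δ (l+1) := P.δ_pos (l+1)
    have hγ0 : (0:ℝ) ≤ (P.γ : ℝ) := NNReal.coe_nonneg _
    have hm0 := P.hmr0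
    -- real inequality
    have key : dist (P.val σ) (P.val τ) ≤
        16 * (P.m:ℝ) * dist (P.F σ) (P.F τ) ^ (P.γ : ℝ) := by
      have h1 : P.δ (l+1) ^ (P.γ : ℝ) ≤ dist (P.F σ) (P.F τ) ^ (P.γ : ℝ) :=
        Real.rpow_le_rpow (le_of_lt hδ0) hd hγ0
      have h2 := P.δ_rpow_γ l
      have h3 : 4 * ((P.m:ℝ))⁻¹ ^ l = 16 * (P.m:ℝ) * (4 * (P.m:ℝ) ^ (l+1))⁻¹ := by
        rw [inv_pow, mul_inv]
        have hml : ((P.m:ℝ)) ^ l ≠ 0 := by positivity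
        field_simp
        ring
      calc dist (P.val σ) (P.val τ) ≤ 4 * ((P.m:ℝ))⁻¹ ^ l := hv
        _ = 16 * (P.m:ℝ) * (4 * (P.m:ℝ) ^ (l+1))⁻¹ := h3
        _ ≤ 16 * (P.m:ℝ) * P.δ (l+1) ^ (P.γ : ℝ) := by
            apply mul_le_mul_of_nonneg_left h2 (by positivity)
        _ ≤ 16 * (P.m:ℝ) * dist (P.F σ) (P.F τ) ^ (P.γ : ℝ) := by
            apply mul_le_mul_of_nonneg_left h1 (by positivity)
    -- convert to edist
    rw [edist_dist, edist_dist, P.g_F, P.g_F]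
    have hC : ((Real.toNNReal (16 * P.m) : ℝ≥0) : ℝ≥0∞) = ENNReal.ofReal (16 * P.m) := rfl
    rw [hC]
    calc ENNReal.ofReal (dist (P.val σ) (P.val τ)) ≤
        ENNReal.ofReal (16 * (P.m:ℝ) * dist (P.F σ) (P.F τ) ^ (P.γ : ℝ)) :=
          ENNReal.ofReal_le_ofReal key
      _ = ENNReal.ofReal (16 * (P.m:ℝ)) *
          ENNReal.ofReal (dist (P.F σ) (P.F τ) ^ (P.γ : ℝ)) := by
          rw [ENNReal.ofReal_mul (by positivity)]
      _ = ENNReal.ofReal (16 * (P.m:ℝ)) *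
          ENNReal.ofReal (dist (P.F σ) (P.F τ)) ^ (P.γ : ℝ) := by
          rw [ENNReal.ofReal_rpow_of_nonneg dist_nonneg hγ0]

lemma F_mem_Ico (σ : ℕ → Fin P.m × Fin P.m) :
    (P.F σ).1 ∈ Ico (0:ℝ) 1 ∧ (P.F σ).2 ∈ Ico (0:ℝ) 1 := by
  have h := P.F_mem σ 0
  have hc : P.cor σ 0 = (0, 0) := rfl
  have hδ0 : P.δ 0 = 1/4 := P.δ_zero
  rw [hc] at h
  simp only at h
  constructor
  · exact ⟨by linarith [h.1], by linarith [h.2.1, hδ0 ▸ le_refl (P.δ 0)]⟩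
  · exact ⟨by linarith [h.2.2.1], by linarith [h.2.2.2]⟩

lemma F_in_Bad (σ : ℕ → Fin P.m × Fin P.m) (q : ℤ) (hq0 : q ≠ 0) :
    P.e ≤ max (|(q:ℝ)| ^ P.i * dni ((q:ℝ) * P.x₁ - (P.F σ).1))
      (|(q:ℝ)| ^ P.j * dni ((q:ℝ) * P.x₂ - (P.F σ).2)) := by
  have hab := abs_q_pos hq0
  have hrp : ∀ u : ℝ, |(q:ℝ)| ^ u * (P.e * |(q:ℝ)| ^ (-u)) = P.e := by
    intro u
    have : |(q:ℝ)| ^ u * |(q:ℝ)| ^ (-u) = 1 := by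
      rw [← Real.rpow_add hab, add_neg_cancel, Real.rpow_zero]
    calc |(q:ℝ)| ^ u * (P.e * |(q:ℝ)| ^ (-u)) =
        P.e * (|(q:ℝ)| ^ u * |(q:ℝ)| ^ (-u)) := by ring
      _ = P.e := by rw [this, mul_one]
  rcases P.F_safe σ hq0 with h | h
  · apply le_max_of_le_left
    calc P.e = |(q:ℝ)| ^ P.i * (P.e * |(q:ℝ)| ^ (-P.i)) := (hrp P.i).symm
      _ = |(q:ℝ)| ^ P.i * P.wq q := rfl
      _ ≤ |(q:ℝ)| ^ P.i * dni ((q:ℝ) * P.x₁ - (P.F σ).1) := by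
          apply mul_le_mul_of_nonneg_left h (le_of_lt (Real.rpow_pos_of_pos hab _))
  · apply le_max_of_le_right
    calc P.e = |(q:ℝ)| ^ P.j * (P.e * |(q:ℝ)| ^ (-P.j)) := (hrp P.j).symm
      _ = |(q:ℝ)| ^ P.j * P.hq q := rfl
      _ ≤ |(q:ℝ)| ^ P.j * dni ((q:ℝ) * P.x₂ - (P.F σ).2) := by
          apply mul_le_mul_of_nonneg_left h (le_of_lt (Real.rpow_pos_of_pos hab _))

lemma dim_lower : 2 * (P.γ : ℝ≥0∞) ≤ dimH (Set.range P.F) := by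
  have hh := P.holder_g
  have himg := hh.dimH_image_le P.γ_pos
  have hsq : (Ico (0:ℝ) 1 ×ˢ Ico (0:ℝ) 1) ⊆ P.g '' (Set.range P.F) := by
    rintro ⟨y₁, y₂⟩ ⟨hy₁, hy₂⟩
    obtain ⟨d₁, hd₁⟩ := P.exists_digits y₁ hy₁
    obtain ⟨d₂, hd₂⟩ := P.exists_digits y₂ hy₂
    refine ⟨P.F (fun l => (d₁ l, d₂ l)), ⟨_, rfl⟩, ?_⟩
    rw [P.g_F]
    simp only [val]
    rw [show (fun l => ((fun l => (d₁ l, d₂ l)) l).1) = d₁ from rfl,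
      show (fun l => ((fun l => (d₁ l, d₂ l)) l).2) = d₂ from rfl, hd₁, hd₂]
  have hsqdim : dimH (Ico (0:ℝ) 1 ×ˢ Ico (0:ℝ) 1) = 2 := by
    have hmem : (Ico (0:ℝ) 1 ×ˢ Ico (0:ℝ) 1) ∈ nhds ((1/2, 1/2) : ℝ × ℝ) :=
      prod_mem_nhds (Ico_mem_nhds (by norm_num) (by norm_num))
        (Ico_mem_nhds (by norm_num) (by norm_num))
    rw [Real.dimH_of_mem_nhds hmem]
    rw [Module.finrank_prod, Module.finrank_self]
    norm_num
  have h2 : (2:ℝ≥0∞) ≤ dimH (P.g '' (Set.range P.F)) := by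
    rw [← hsqdim]
    exact dimH_mono hsq
  have hloc := le_trans h2 himg
  rw [ENNReal.le_div_iff_mul_le (Or.inl (by exact_mod_cast P.γ_pos.ne'))
    (Or.inl ENNReal.coe_ne_top)] at hloc
  calc 2 * (P.γ : ℝ≥0∞) = (2:ℝ≥0∞) * P.γ := rfl
    _ ≤ dimH (Set.range P.F) := hloc

end Cfg

/-- The main lower bound: under the normalization `i ≤ j`, the twisted set has
Hausdorff dimension at least 2. -/
lemma lower_main (i j x₁ x₂ : ℝ) (hi : 0 < i) (hij : i ≤ j) (hsum : i + j = 1)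
    (ε : ℝ) (hε0 : 0 < ε) (hε1 : ε ≤ 1/2)
    (hsep : ∀ r : ℤ, r ≠ 0 →
      ε ≤ |(r:ℝ)| ^ i * dni ((r:ℝ) * x₁) ∨ ε ≤ |(r:ℝ)| ^ j * dni ((r:ℝ) * x₂)) :
    (2:ℝ≥0∞) ≤ dimH {α : ℝ × ℝ | α.1 ∈ Set.Ico (0:ℝ) 1 ∧ α.2 ∈ Set.Ico (0:ℝ) 1 ∧
      ∃ ε' > (0:ℝ), ∀ q : ℤ, q ≠ 0 →
        ε' ≤ max (|(q:ℝ)| ^ i * dni ((q:ℝ) * x₁ - α.1))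
          (|(q:ℝ)| ^ j * dni ((q:ℝ) * x₂ - α.2))} := by
  set B := {α : ℝ × ℝ | α.1 ∈ Set.Ico (0:ℝ) 1 ∧ α.2 ∈ Set.Ico (0:ℝ) 1 ∧
      ∃ ε' > (0:ℝ), ∀ q : ℤ, q ≠ 0 →
        ε' ≤ max (|(q:ℝ)| ^ i * dni ((q:ℝ) * x₁ - α.1))
          (|(q:ℝ)| ^ j * dni ((q:ℝ) * x₂ - α.2))} with hB
  have key : ∀ S : ℕ, (hs : 8 ≤ S) →
      2 * (((⟨i, j, x₁, x₂, ε, S, hi, hij, hsum, hε0, hε1, hsep, hs⟩ : Cfg).γ : ℝ≥0∞)) ≤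
      dimH B := by
    intro S hs
    set P : Cfg := ⟨i, j, x₁, x₂, ε, S, hi, hij, hsum, hε0, hε1, hsep, hs⟩ with hP
    have hsub : Set.range P.F ⊆ B := by
      rintro α ⟨σ, rfl⟩
      exact ⟨(P.F_mem_Ico σ).1, (P.F_mem_Ico σ).2, P.e, P.e_pos,
        fun q hq => P.F_in_Bad σ q hq⟩
    exact le_trans P.dim_lower (dimH_mono hsub)
  by_contra hcon
  push_neg at hcon
  have hDtop : dimH B ≠ ⊤ := by
    intro h
    rw [h] at hcon
    exact absurd hcon (by simp)
  set d : ℝ := (dimH B).toReal with hd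
  have hd2 : d < 2 := by
    have := (ENNReal.toReal_lt_toReal hDtop (by norm_num : (2:ℝ≥0∞) ≠ ⊤)).2 hcon
    simpa using this
  set η : ℝ := 1 - d/2 with hη
  have hη0 : 0 < η := by
    simp only [hη]
    linarith
  have hd0 : 0 ≤ d := ENNReal.toReal_nonneg
  -- choose S large
  set X : ℝ := Real.log 14 / η with hX
  set S : ℕ := ⌈Real.exp X⌉₊ + 8 with hSdef
  have hs : 8 ≤ S := by omega
  have hSX : Real.exp X ≤ (S:ℝ) := by
    have h1 := Nat.le_ceil (Real.exp X)
    have h2 : ((⌈Real.exp X⌉₊ : ℕ) : ℝ) ≤ (S:ℝ) := by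
      rw [hSdef]
      push_cast
      linarith
    linarith
  set P : Cfg := ⟨i, j, x₁, x₂, ε, S, hi, hij, hsum, hε0, hε1, hsep, hs⟩ with hP
  have hkey := key S hs
  have hreal : 2 * (P.γ : ℝ) ≤ d := by
    have h1 : ((2 * (P.γ : ℝ≥0∞))).toReal ≤ d := ENNReal.toReal_mono hDtop hkey
    rw [ENNReal.toReal_mul] at h1
    simpa using h1
  -- but γ > d/2
  have hγbig : d/2 < (P.γ : ℝ) := by
    rw [P.γ_coe]
    have hm : (P.m : ℕ) = S - 6 := rfl
    have hR : (P.R : ℕ) = 2 * S := rfl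
    have hmr : (2:ℝ) ≤ (P.m:ℝ) := P.hmr
    have hRr : (16:ℝ) ≤ (P.R:ℝ) := P.hRr
    have hm0 : (0:ℝ) < (P.m:ℝ) := by linarith
    have hR0 : (0:ℝ) < (P.R:ℝ) := by linarith
    have hlogR := P.logR_pos
    -- R/m ≤ 14
    have hratio : (P.R : ℝ) ≤ 14 * (P.m:ℝ) := by
      have h1 : (P.R : ℕ) = 2 * S := rfl
      have h2 : (P.m : ℕ) = S - 6 := rfl
      have h14 : (P.R : ℕ) ≤ 14 * P.m := by
        rw [h1, h2]
        omega
      exact_mod_cast h14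
    have hlog14 : Real.log (P.R:ℝ) - Real.log (P.m:ℝ) ≤ Real.log 14 := by
      have h1 : Real.log (P.R:ℝ) ≤ Real.log (14 * (P.m:ℝ)) :=
        Real.log_le_log hR0 hratio
      rw [Real.log_mul (by norm_num) (ne_of_gt hm0)] at h1
      linarith
    -- log R > X
    have hlogRX : X < Real.log (P.R:ℝ) := by
      have h1 : Real.exp X ≤ (S:ℝ) := hSX
      have hS0 : (0:ℝ) < (S:ℝ) := by
        have : (8:ℝ) ≤ (S:ℝ) := by exact_mod_cast hs
        linarith
      have h2 : X ≤ Real.log (S:ℝ) := by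
        rw [← Real.log_exp X]
        exact Real.log_le_log (Real.exp_pos X) h1
      have h3 : Real.log (S:ℝ) < Real.log (P.R:ℝ) := by
        apply Real.log_lt_log hS0
        have : (P.R : ℕ) = 2 * S := rfl
        have h4 : (S:ℝ) < 2 * (S:ℝ) := by linarith
        calc (S:ℝ) < 2 * (S:ℝ) := h4
          _ = (P.R : ℝ) := by rw [this]; push_cast; ring
      linarith
    -- conclude
    rw [lt_div_iff₀ hlogR] at *
    -- d/2 * log R < log m
    have hXlog : Real.log 14 < η * Real.log (P.R:ℝ) := by
      rw [hX] at hlogRX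
      rw [div_lt_iff₀ hη0] at hlogRX
      nlinarith
    have : d/2 * Real.log (P.R:ℝ) < Real.log (P.m:ℝ) := by
      have h5 : d/2 = 1 - η := by rw [hη]; ring
      rw [h5]
      nlinarith [hlog14]
    linarith [this]
  have : d < 2 * (P.γ : ℝ) := by linarith
  linarith

end BadAux


open MeasureTheory BadAux in
/-- For `i, j > 0` with `i + j = 1` and `x = (x₁, x₂) ∈ [0,1)²`
belonging to `Bad(i,j)`, the twisted set `Bad_x(i,j)` has full Hausdorff
dimension `2`. -/
theorem badTwisted_two_dim_dimH_eq (i j : ℝ) (hi : 0 < i) (hj : 0 < j)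
    (hij : i + j = 1) (x₁ x₂ : ℝ)
    (hx₁ : x₁ ∈ Set.Ico (0 : ℝ) 1) (hx₂ : x₂ ∈ Set.Ico (0 : ℝ) 1)
    (hx : ∃ ε > (0 : ℝ), ∀ q : ℤ, q ≠ 0 →
      ε ≤ max (|(q : ℝ)| ^ i * dni ((q : ℝ) * x₁)) (|(q : ℝ)| ^ j * dni ((q : ℝ) * x₂))) :
    dimH {α : ℝ × ℝ | α.1 ∈ Set.Ico (0 : ℝ) 1 ∧ α.2 ∈ Set.Ico (0 : ℝ) 1 ∧
      ∃ ε > (0 : ℝ), ∀ q : ℤ, q ≠ 0 →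
        ε ≤ max (|(q : ℝ)| ^ i * dni ((q : ℝ) * x₁ - α.1))
              (|(q : ℝ)| ^ j * dni ((q : ℝ) * x₂ - α.2))} = 2 := by
  obtain ⟨ε₀, hε₀, hsep₀⟩ := hx
  set ε : ℝ := min ε₀ (1/2) with hεdef
  have hε0 : 0 < ε := lt_min hε₀ (by norm_num)
  have hε1 : ε ≤ 1/2 := min_le_right _ _
  have hsep : ∀ r : ℤ, r ≠ 0 →
      ε ≤ |(r:ℝ)| ^ i * dni ((r:ℝ) * x₁) ∨ ε ≤ |(r:ℝ)| ^ j * dni ((r:ℝ) * x₂) := by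
    intro r hr
    exact le_max_iff.1 (le_trans (min_le_left _ _) (hsep₀ r hr))
  apply le_antisymm
  · calc dimH {α : ℝ × ℝ | α.1 ∈ Set.Ico (0 : ℝ) 1 ∧ α.2 ∈ Set.Ico (0 : ℝ) 1 ∧
        ∃ ε > (0 : ℝ), ∀ q : ℤ, q ≠ 0 →
          ε ≤ max (|(q : ℝ)| ^ i * dni ((q : ℝ) * x₁ - α.1))
                (|(q : ℝ)| ^ j * dni ((q : ℝ) * x₂ - α.2))} ≤
        dimH (Set.univ : Set (ℝ × ℝ)) := dimH_mono (Set.subset_univ _)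
      _ = 2 := by
        rw [Real.dimH_univ_eq_finrank (ℝ × ℝ), Module.finrank_prod, Module.finrank_self]
        norm_num
  · rcases le_total i j with hle | hle
    · exact lower_main i j x₁ x₂ hi hle hij ε hε0 hε1 hsep
    · have hswap := lower_main j i x₂ x₁ hj hle (by linarith) ε hε0 hε1
        (fun r hr => (hsep r hr).symm)
      have hiso : Isometry (Prod.swap : ℝ × ℝ → ℝ × ℝ) := by
        apply Isometry.of_dist_eq
        intro a b
        rw [Prod.dist_eq, Prod.dist_eq]
        exact max_comm _ _
      have himg : (Prod.swap '' {β : ℝ × ℝ | β.1 ∈ Set.Ico (0:ℝ) 1 ∧ β.2 ∈ Set.Ico (0:ℝ) 1 ∧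
          ∃ ε' > (0:ℝ), ∀ q : ℤ, q ≠ 0 →
            ε' ≤ max (|(q:ℝ)| ^ j * dni ((q:ℝ) * x₂ - β.1))
              (|(q:ℝ)| ^ i * dni ((q:ℝ) * x₁ - β.2))}) =
          {α : ℝ × ℝ | α.1 ∈ Set.Ico (0 : ℝ) 1 ∧ α.2 ∈ Set.Ico (0 : ℝ) 1 ∧
            ∃ ε > (0 : ℝ), ∀ q : ℤ, q ≠ 0 →
              ε ≤ max (|(q : ℝ)| ^ i * dni ((q : ℝ) * x₁ - α.1))
                (|(q : ℝ)| ^ j * dni ((q : ℝ) * x₂ - α.2))} := by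
        rw [Set.image_swap_eq_preimage_swap]
        ext α
        simp only [Set.mem_preimage, Set.mem_setOf_eq, Prod.fst_swap, Prod.snd_swap]
        constructor
        · rintro ⟨h1, h2, ε', hε', hq⟩
          exact ⟨h2, h1, ε', hε', fun q hq0 => by rw [max_comm]; exact hq q hq0⟩
        · rintro ⟨h1, h2, ε', hε', hq⟩
          exact ⟨h2, h1, ε', hε', fun q hq0 => by rw [max_comm]; exact hq q hq0⟩
      calc (2:ℝ≥0∞) ≤ dimH {β : ℝ × ℝ | β.1 ∈ Set.Ico (0:ℝ) 1 ∧ β.2 ∈ Set.Ico (0:ℝ) 1 ∧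
          ∃ ε' > (0:ℝ), ∀ q : ℤ, q ≠ 0 →
            ε' ≤ max (|(q:ℝ)| ^ j * dni ((q:ℝ) * x₂ - β.1))
              (|(q:ℝ)| ^ i * dni ((q:ℝ) * x₁ - β.2))} := hswap
        _ = dimH (Prod.swap '' {β : ℝ × ℝ | β.1 ∈ Set.Ico (0:ℝ) 1 ∧ β.2 ∈ Set.Ico (0:ℝ) 1 ∧
            ∃ ε' > (0:ℝ), ∀ q : ℤ, q ≠ 0 →
              ε' ≤ max (|(q:ℝ)| ^ j * dni ((q:ℝ) * x₂ - β.1))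
                (|(q:ℝ)| ^ i * dni ((q:ℝ) * x₁ - β.2))}) := (hiso.dimH_image _).symm
        _ = _ := by rw [himg]
end

section
/- Let n, m ≥ 1 be integers, let k = (k_1,…,k_n) be a weight vector, let M be an m×n real matrix with forms M_i, and let γ ∈ (0,1). Suppose that for every T ≥ 1 the only integer point (u,v) ∈ ℤ^n × ℤ^m with |u_j| ≤ T^{m k_j} for all 1 ≤ j ≤ n and max_{1≤i≤m} |M_i(u) − v_i| ≤ γ T^{−1} is the zero vector. Then for every T ≥ 1 there exists an integer vector (u,v) ∈ ℤ^n × ℤ^m, with u ≠ 0, satisfying: T^{m k_1} < |u_1| ≤ γ^{−m} T^{m k_1}, |u_j| ≤ T^{m k_j} for 2 ≤ j ≤ n, and max_{1≤i≤m} |M_i(u) − v_i| ≤ γ T^{−1}. -/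
open Submodule MeasureTheory Set


/-- If for every `T ≥ 1` the only integer point `(u,v)` with
`|u_j| ≤ T^{m k_j}` for all `j` and `max_i |M_i(u) − v_i| ≤ γ T⁻¹` is the zero
vector, then for every `T ≥ 1` there is an integer point `(u,v)` with `u ≠ 0`,
`T^{m k₁} < |u₁| ≤ γ⁻ᵐ T^{m k₁}`, `|u_j| ≤ T^{m k_j}` for `j ≥ 2`, and
`max_i |M_i(u) − v_i| ≤ γ T⁻¹`. -/
theorem exists_nonzero_point_of_no_small_point (n m : ℕ) (hn : 0 < n) (hm : 0 < m)
    (k : Fin n → ℝ) (hk : ∀ j, 0 < k j) (hksum : ∑ j, k j = 1)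
    (M : Matrix (Fin m) (Fin n) ℝ) (γ : ℝ) (hγ : γ ∈ Set.Ioo (0 : ℝ) 1)
    (hzero : ∀ T : ℝ, 1 ≤ T → ∀ (u : Fin n → ℤ) (v : Fin m → ℤ),
      (∀ j : Fin n, |(u j : ℝ)| ≤ T ^ ((m : ℝ) * k j)) →
      (∀ i : Fin m, |(∑ j, (u j : ℝ) * M i j) - (v i : ℝ)| ≤ γ * T⁻¹) →
      u = 0 ∧ v = 0) :
    ∀ T : ℝ, 1 ≤ T → ∃ (u : Fin n → ℤ) (v : Fin m → ℤ), u ≠ 0 ∧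
      T ^ ((m : ℝ) * k ⟨0, hn⟩) < |(u ⟨0, hn⟩ : ℝ)| ∧
      |(u ⟨0, hn⟩ : ℝ)| ≤ γ ^ (-(m : ℝ)) * T ^ ((m : ℝ) * k ⟨0, hn⟩) ∧
      (∀ j : Fin n, j ≠ ⟨0, hn⟩ → |(u j : ℝ)| ≤ T ^ ((m : ℝ) * k j)) ∧
      (∀ i : Fin m, |(∑ j, (u j : ℝ) * M i j) - (v i : ℝ)| ≤ γ * T⁻¹) := by
  intro T hT
  obtain ⟨hγ0, hγ1⟩ := hγ
  have hT0 : (0 : ℝ) < T := lt_of_lt_of_le one_pos hT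
  classical
  set d := n + m with hd
  let e : Fin n ⊕ Fin m ≃ Fin d := finSumFinEquiv
  -- the bounds
  set c : Fin n ⊕ Fin m → ℝ := Sum.elim
      (fun j : Fin n => (if j = ⟨0, hn⟩ then γ ^ (-(m : ℝ)) else 1) * T ^ ((m : ℝ) * k j))
      (fun _ : Fin m => γ * T⁻¹) with hc
  have hcpos : ∀ z, 0 < c z := by
    rintro (j | i)
    · have : (0 : ℝ) < T ^ ((m : ℝ) * k j) := Real.rpow_pos_of_pos hT0 _
      simp only [hc, Sum.elim_inl]
      split
      · exact mul_pos (Real.rpow_pos_of_pos hγ0 _) this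
      · simpa using this
    · exact mul_pos hγ0 (inv_pos.2 hT0)
  -- the box and the body
  set box : Set (Fin d → ℝ) :=
    Set.pi Set.univ fun l => Set.Icc (-(c (e.symm l))) (c (e.symm l)) with hbox
  set A : Matrix (Fin d) (Fin d) ℝ :=
    Matrix.reindex e e
      (Matrix.fromBlocks (1 : Matrix (Fin n) (Fin n) ℝ) 0
        (-M) (1 : Matrix (Fin m) (Fin m) ℝ)) with hA
  set Ψ : (Fin d → ℝ) →ₗ[ℝ] (Fin d → ℝ) := Matrix.toLin' A with hΨ
  have hAdet : A.det = 1 := by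
    rw [hA, Matrix.det_reindex_self, Matrix.det_fromBlocks_zero₁₂]
    simp
  have hΨdet : LinearMap.det Ψ = 1 := by
    rw [hΨ, LinearMap.det_toLin']; exact hAdet
  have hΨdet0 : LinearMap.det Ψ ≠ 0 := by rw [hΨdet]; norm_num
  -- row computations
  have hrow1 : ∀ (x : Fin d → ℝ) (j : Fin n), Ψ x (e (Sum.inl j)) = x (e (Sum.inl j)) := by
    intro x j
    rw [hΨ, Matrix.toLin'_apply]
    show ∑ l', A (e (Sum.inl j)) l' * x l' = _
    rw [← Equiv.sum_comp e (fun l' => A (e (Sum.inl j)) l' * x l'), Fintype.sum_sum_type]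
    simp only [hA, Matrix.reindex_apply, Matrix.submatrix_apply, Equiv.symm_apply_apply,
      Matrix.fromBlocks_apply₁₁, Matrix.fromBlocks_apply₁₂, Matrix.one_apply,
      Matrix.zero_apply, zero_mul, Finset.sum_const_zero, add_zero, ite_mul, one_mul]
    simp
  have hrow2 : ∀ (x : Fin d → ℝ) (i : Fin m),
      Ψ x (e (Sum.inr i)) = x (e (Sum.inr i)) - ∑ j, x (e (Sum.inl j)) * M i j := by
    intro x i
    rw [hΨ, Matrix.toLin'_apply]
    show ∑ l', A (e (Sum.inr i)) l' * x l' = _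
    rw [← Equiv.sum_comp e (fun l' => A (e (Sum.inr i)) l' * x l'), Fintype.sum_sum_type]
    simp only [hA, Matrix.reindex_apply, Matrix.submatrix_apply, Equiv.symm_apply_apply,
      Matrix.fromBlocks_apply₂₁, Matrix.fromBlocks_apply₂₂, Matrix.one_apply, ite_mul, one_mul]
    simp [Finset.sum_neg_distrib, mul_comm, sub_eq_neg_add]
  set s : Set (Fin d → ℝ) := Ψ ⁻¹' box with hs
  -- properties of the body
  have hsymm : ∀ x ∈ s, -x ∈ s := by
    intro x hx
    simp only [hs, Set.mem_preimage, hbox, Set.mem_pi, Set.mem_univ, forall_true_left,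
      Set.mem_Icc, map_neg] at hx ⊢
    intro l
    obtain ⟨h1, h2⟩ := hx l
    constructor <;> simp only [Pi.neg_apply] <;> linarith
  have hconv : Convex ℝ s :=
    (convex_pi fun l _ => convex_Icc _ _).linear_preimage Ψ
  have hboxcpt : IsCompact box := isCompact_univ_pi fun l => isCompact_Icc
  have hAunit : IsUnit A.det := by rw [hAdet]; exact isUnit_one
  have hinv1 : A⁻¹ * A = 1 := Matrix.nonsing_inv_mul A hAunit
  have hinv2 : A * A⁻¹ = 1 := Matrix.mul_nonsing_inv A hAunit
  have key1 : ∀ y : Fin d → ℝ, Matrix.toLin' A⁻¹ (Ψ y) = y := by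
    intro y
    rw [hΨ, ← Matrix.toLin'_mul_apply, hinv1, Matrix.toLin'_one, LinearMap.id_apply]
  have key2 : ∀ y : Fin d → ℝ, Ψ (Matrix.toLin' A⁻¹ y) = y := by
    intro y
    rw [hΨ, ← Matrix.toLin'_mul_apply, hinv2, Matrix.toLin'_one, LinearMap.id_apply]
  have hcpt : IsCompact s := by
    have hse : s = Matrix.toLin' A⁻¹ '' box := by
      ext x
      simp only [hs, Set.mem_preimage]
      constructor
      · intro hx
        exact ⟨Ψ x, hx, key1 x⟩
      · rintro ⟨y, hy, rfl⟩
        rwa [key2]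
    rw [hse]
    exact hboxcpt.image (Matrix.toLin' A⁻¹).continuous_of_finiteDimensional
  -- volume of the box
  have hprodc : ∏ z, c z = γ ^ (-(m : ℝ)) * T ^ (m : ℕ) * (γ * T⁻¹) ^ (m : ℕ) := by
    rw [Fintype.prod_sum_type]
    simp only [hc, Sum.elim_inl, Sum.elim_inr, Finset.prod_const, Finset.card_univ,
      Fintype.card_fin]
    rw [Finset.prod_mul_distrib, Finset.prod_ite_eq' Finset.univ (⟨0, hn⟩ : Fin n)
      (fun _ => γ ^ (-(m : ℝ)))]
    have : ∏ j, T ^ ((m : ℝ) * k j) = T ^ (m : ℕ) := by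
      rw [← Real.rpow_sum_of_pos hT0, ← Finset.mul_sum, hksum, mul_one, Real.rpow_natCast]
    rw [this]
    simp
  have hprodc1 : ∏ z, c z = 1 := by
    rw [hprodc, Real.rpow_neg hγ0.le, Real.rpow_natCast, mul_pow]
    field_simp
    rw [one_div, inv_pow, mul_inv_cancel₀ (pow_ne_zero _ hT0.ne')]
  have hvolbox : volume box = 2 ^ d := by
    rw [hbox, volume_pi_pi]
    have : ∀ l : Fin d, volume (Set.Icc (-(c (e.symm l))) (c (e.symm l)))
        = ENNReal.ofReal (2 * c (e.symm l)) := by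
      intro l; rw [Real.volume_Icc]; ring_nf
    simp_rw [this]
    rw [← ENNReal.ofReal_prod_of_nonneg (fun l _ => (mul_pos two_pos (hcpos _)).le)]
    rw [← Equiv.prod_comp e (fun l => (2 : ℝ) * c (e.symm l))]
    simp_rw [Equiv.symm_apply_apply]
    rw [Finset.prod_mul_distrib, Finset.prod_const, hprodc1, mul_one, Finset.card_univ]
    have hcard : Fintype.card (Fin n ⊕ Fin m) = d := by simp [hd]
    rw [hcard, ENNReal.ofReal_pow (by norm_num : (0:ℝ) ≤ 2)]
    norm_num
  have hvols : volume s = 2 ^ d := by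
    rw [hs, MeasureTheory.Measure.addHaar_preimage_linearMap volume hΨdet0, hΨdet, hvolbox]
    simp
  -- the lattice
  set b : Module.Basis (Fin d) ℝ (Fin d → ℝ) := Pi.basisFun ℝ (Fin d) with hb
  set L : AddSubgroup (Fin d → ℝ) := (span ℤ (Set.range ⇑b)).toAddSubgroup with hL
  haveI : Countable L := inferInstanceAs (Countable (span ℤ (Set.range ⇑b)))
  haveI : DiscreteTopology L := inferInstanceAs (DiscreteTopology (span ℤ (Set.range ⇑b)))
  haveI : Nonempty (Fin d) := ⟨⟨0, by omega⟩⟩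
  haveI : Nontrivial (Fin d → ℝ) := inferInstance
  have fund : IsAddFundamentalDomain L (ZSpan.fundamentalDomain b) volume :=
    ZSpan.isAddFundamentalDomain' b volume
  have hvolF : volume (ZSpan.fundamentalDomain b) = 1 := by
    rw [hb, ZSpan.fundamentalDomain_pi_basisFun, volume_pi_pi]
    simp [Real.volume_Ico]
  have hfinrank : Module.finrank ℝ (Fin d → ℝ) = d := Module.finrank_fin_fun ℝ
  have hle : volume (ZSpan.fundamentalDomain b) * 2 ^ Module.finrank ℝ (Fin d → ℝ)
      ≤ volume s := by
    rw [hvolF, hfinrank, hvols, one_mul]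
  obtain ⟨x, hx0, hxs⟩ :=
    exists_ne_zero_mem_lattice_of_measure_mul_two_pow_le_measure fund hsymm hconv hcpt hle
  -- extract integer coordinates
  have hzint : ∀ l : Fin d, ∃ zz : ℤ, ((x : Fin d → ℝ) l) = zz := by
    intro l
    have hmem : (x : Fin d → ℝ) ∈ span ℤ (Set.range ⇑b) := x.2
    obtain ⟨zz, hzz⟩ := (b.mem_span_iff_repr_mem ℤ _).1 hmem l
    refine ⟨zz, ?_⟩
    have h' : (b.repr (x : Fin d → ℝ)) l = (x : Fin d → ℝ) l := by
      rw [hb]; exact Pi.basisFun_repr ℝ (Fin d) _ l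
    rw [← h', ← hzz]
    simp
  choose z hz using hzint
  set u : Fin n → ℤ := fun j => z (e (Sum.inl j)) with hu
  set v : Fin m → ℤ := fun i => z (e (Sum.inr i)) with hv
  have hboxmem : ∀ l : Fin d, Ψ (x : Fin d → ℝ) l ∈
      Set.Icc (-(c (e.symm l))) (c (e.symm l)) := by
    intro l
    have := hxs
    simp only [hs, Set.mem_preimage, hbox, Set.mem_pi, Set.mem_univ, forall_true_left] at this
    exact this l
  have h1 : ∀ j : Fin n, |(u j : ℝ)| ≤
      (if j = ⟨0, hn⟩ then γ ^ (-(m : ℝ)) else 1) * T ^ ((m : ℝ) * k j) := by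
    intro j
    have h := hboxmem (e (Sum.inl j))
    rw [hrow1, hz, Equiv.symm_apply_apply] at h
    simp only [hc, Sum.elim_inl, Set.mem_Icc] at h
    exact abs_le.mpr h
  have h2 : ∀ i : Fin m, |(∑ j, (u j : ℝ) * M i j) - (v i : ℝ)| ≤ γ * T⁻¹ := by
    intro i
    have h := hboxmem (e (Sum.inr i))
    rw [hrow2, Equiv.symm_apply_apply] at h
    simp only [hc, Sum.elim_inr, Set.mem_Icc] at h
    have heq : (x : Fin d → ℝ) (e (Sum.inr i)) - ∑ j, (x : Fin d → ℝ) (e (Sum.inl j)) * M i j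
        = (v i : ℝ) - ∑ j, (u j : ℝ) * M i j := by
      rw [hz]
      congr 1
      exact Finset.sum_congr rfl fun j _ => by rw [hz]
    rw [heq] at h
    rw [abs_sub_comm, abs_le]
    constructor <;> linarith [h.1, h.2]
  -- the main dichotomy
  have hnotle : ¬ |(u ⟨0, hn⟩ : ℝ)| ≤ T ^ ((m : ℝ) * k ⟨0, hn⟩) := by
    intro hle0
    have hall : ∀ j : Fin n, |(u j : ℝ)| ≤ T ^ ((m : ℝ) * k j) := by
      intro j
      by_cases hj : j = ⟨0, hn⟩
      · subst hj; exact hle0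
      · have := h1 j; rwa [if_neg hj, one_mul] at this
    obtain ⟨hu0, hv0⟩ := hzero T hT u v hall h2
    apply hx0
    have hzzero : ∀ l : Fin d, z l = 0 := by
      intro l
      rcases hsl : e.symm l with j | i
      · have h0 : z (e (Sum.inl j)) = 0 := congrFun hu0 j
        rw [← hsl, Equiv.apply_symm_apply] at h0
        exact h0
      · have h0 : z (e (Sum.inr i)) = 0 := congrFun hv0 i
        rw [← hsl, Equiv.apply_symm_apply] at h0
        exact h0
    have hxzero : (x : Fin d → ℝ) = 0 := by
      funext l
      rw [hz, hzzero]
      simp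
    exact Subtype.ext hxzero
  have hgt : T ^ ((m : ℝ) * k ⟨0, hn⟩) < |(u ⟨0, hn⟩ : ℝ)| := lt_of_not_ge hnotle
  have hTpow_pos : (0 : ℝ) < T ^ ((m : ℝ) * k ⟨0, hn⟩) := Real.rpow_pos_of_pos hT0 _
  refine ⟨u, v, ?_, hgt, ?_, ?_, h2⟩
  · intro h0
    rw [h0] at hgt
    simp at hgt
    exact absurd hgt (not_lt.2 hTpow_pos.le)
  · have := h1 ⟨0, hn⟩
    rwa [if_pos rfl] at this
  · intro j hj
    have := h1 j
    rwa [if_neg hj, one_mul] at this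
end

section
/- Let n, m ≥ 1 be integers, let k = (k_1,…,k_n) be a weight vector with k_1 = max_{1≤j≤n} k_j, let M be an m×n real matrix with forms M_i, and let γ ∈ (0,1) be such that inf_{u ∈ ℤ^n, u ≠ 0} max_{1≤i≤m} ( max_{1≤j≤n} |u_j|^{1/(m k_j)} ) ‖M_i(u)‖ ≥ γ. Set R = ⌈γ^{−1/k_1}⌉ + 1 and T_r = R^r for r = 0, 1, 2, …. Then there exist sequences of vectors u_r ∈ ℤ^n and v_r ∈ ℤ^m such that, writing φ_r = max_{1≤i≤m} |M_i(u_r) − v_i(r)|, for every r ≥ 0: (i) T_r^{m k_1} < |u_1(r)| ≤ γ^{−m} T_r^{m k_1}; (ii) |u_j(r)| ≤ T_r^{m k_j} for 2 ≤ j ≤ n; (iii) γ^{1+1/k_1} T_r^{−1} ≤ φ_r ≤ γ T_r^{−1}; (iv) φ_{r+1} < φ_r; and (v) φ_r → 0 as r → ∞. Moreover φ_r ≤ γ R T_{r+1}^{−1} and max_{1≤i≤m} ‖M_i(u_r)‖ = φ_r for every r. -/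
open Filter

section Box
open MeasureTheory Module
open scoped ENNReal

theorem dirichlet_box {n m : ℕ} (hn : 0 < n) (hm : 0 < m)
    (M : Matrix (Fin m) (Fin n) ℝ) (b : Fin n → ℝ) (δ : ℝ)
    (hδ : 0 < δ) (hδ1 : δ ≤ 1) (hb : ∀ j, 0 < b j)
    (hvol : 1 < (∏ j, b j) * δ ^ m) :
    ∃ u : Fin n → ℤ, u ≠ 0 ∧ (∀ j, |(u j : ℝ)| < b j) ∧
      ∀ i, ∃ w : ℤ, |(∑ j, (u j : ℝ) * M i j) + (w : ℝ)| < δ := by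
  classical
  let bas : Basis (Fin n ⊕ Fin m) ℝ ((Fin n ⊕ Fin m) → ℝ) := Pi.basisFun ℝ (Fin n ⊕ Fin m)
  let c : (Fin n ⊕ Fin m) → ℝ := Sum.elim b fun _ => δ
  have hc : ∀ i, 0 < c i := by rintro (j | i) <;> simp [c, hb, hδ]
  set s : Set ((Fin n ⊕ Fin m) → ℝ) := Set.pi Set.univ fun i => Set.Ioo (-(c i)) (c i) with hs
  let A : Matrix (Fin n ⊕ Fin m) (Fin n ⊕ Fin m) ℝ := Matrix.fromBlocks 1 0 (Matrix.of fun i j => M i j) 1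
  have hdetA : A.det = 1 := by
    rw [Matrix.det_fromBlocks_zero₁₂, Matrix.det_one, Matrix.det_one, one_mul]
  set f : ((Fin n ⊕ Fin m) → ℝ) →ₗ[ℝ] ((Fin n ⊕ Fin m) → ℝ) := Matrix.toLin' A with hf
  have hdetf : LinearMap.det f = 1 := by rw [hf, LinearMap.det_toLin']; exact hdetA
  have fund := ZSpan.isAddFundamentalDomain' bas volume
  haveI : Countable (Submodule.span ℤ (Set.range ⇑bas)).toAddSubgroup :=
    inferInstanceAs (Countable (Submodule.span ℤ (Set.range ⇑bas)))
  have hFvol : volume (ZSpan.fundamentalDomain bas) = 1 := by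
    rw [ZSpan.fundamentalDomain_pi_basisFun, volume_pi_pi]
    simp
  have hsvol : volume s = ENNReal.ofReal (∏ i, (2 * c i)) := by
    rw [hs, volume_pi_pi]
    rw [ENNReal.ofReal_prod_of_nonneg (fun i _ => by linarith [hc i])]
    congr 1
    ext i
    rw [Real.volume_Ioo]
    congr 1
    ring
  have hcprod : (∏ i, (2 * c i)) = 2 ^ (n + m) * ((∏ j, b j) * δ ^ m) := by
    rw [Fintype.prod_sum_type]
    simp only [c, Sum.elim_inl, Sum.elim_inr]
    rw [Finset.prod_mul_distrib, Finset.prod_mul_distrib]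
    simp [Finset.prod_const, pow_add]
    ring
  have hμs : volume (ZSpan.fundamentalDomain bas) * 2 ^ finrank ℝ ((Fin n ⊕ Fin m) → ℝ) <
      volume (f ⁻¹' s) := by
    rw [MeasureTheory.Measure.addHaar_preimage_linearMap volume
      (by rw [hdetf]; norm_num) s, hdetf, hFvol, hsvol]
    simp only [inv_one, abs_one, ENNReal.ofReal_one, one_mul]
    rw [finrank_pi, Fintype.card_sum, Fintype.card_fin, Fintype.card_fin]
    calc (2 : ℝ≥0∞) ^ (n + m) = ENNReal.ofReal ((2 : ℝ) ^ (n + m)) := by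
          rw [ENNReal.ofReal_pow (by norm_num)]
          norm_num
      _ < ENNReal.ofReal (∏ i, (2 * c i)) := by
          have hpp : (0:ℝ) < ∏ i : Fin n ⊕ Fin m, 2 * c i := by
            rw [hcprod]
            have : (0:ℝ) < ∏ j, b j := Finset.prod_pos fun j _ => hb j
            positivity
          rw [ENNReal.ofReal_lt_ofReal_iff hpp]
          rw [hcprod]
          have h2 : (0:ℝ) < 2 ^ (n + m) := by positivity
          nlinarith
  have hsymm : ∀ x ∈ f ⁻¹' s, -x ∈ f ⁻¹' s := by
    intro x hx
    simp only [Set.mem_preimage, map_neg] at hx ⊢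
    intro i _
    have h := hx i (Set.mem_univ i)
    simp only [Set.mem_Ioo, Pi.neg_apply] at h ⊢
    constructor <;> linarith [h.1, h.2]
  have hconv : Convex ℝ (f ⁻¹' s) :=
    (convex_pi fun i _ => convex_Ioo _ _).linear_preimage f
  obtain ⟨x, hx0, hxmem⟩ :=
    exists_ne_zero_mem_lattice_of_measure_mul_two_pow_lt_measure fund hsymm hconv hμs
  -- integer coordinates
  have hint : ∀ i : Fin n ⊕ Fin m, ∃ z : ℤ, ((z : ℝ)) = (x : (Fin n ⊕ Fin m) → ℝ) i := by
    intro i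
    have hx' : (x : (Fin n ⊕ Fin m) → ℝ) ∈ Submodule.span ℤ (Set.range ⇑bas) := by
      have := x.2
      rwa [Submodule.mem_toAddSubgroup] at this
    obtain ⟨z, hz⟩ := (bas.mem_span_iff_repr_mem ℤ _).mp hx' i
    refine ⟨z, ?_⟩
    simpa [bas, Pi.basisFun_repr] using hz
  choose z hz using hint
  -- compute f x
  have hfx : f (x : (Fin n ⊕ Fin m) → ℝ) ∈ s := hxmem
  have hmv : f (x : (Fin n ⊕ Fin m) → ℝ) = A.mulVec (x : (Fin n ⊕ Fin m) → ℝ) := Matrix.toLin'_apply A _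
  have hxelim : (x : (Fin n ⊕ Fin m) → ℝ) = Sum.elim ((x : (Fin n ⊕ Fin m) → ℝ) ∘ Sum.inl) ((x : (Fin n ⊕ Fin m) → ℝ) ∘ Sum.inr) :=
    (Sum.elim_comp_inl_inr _).symm
  have hblocks : A.mulVec (x : (Fin n ⊕ Fin m) → ℝ) =
      Sum.elim ((x : (Fin n ⊕ Fin m) → ℝ) ∘ Sum.inl)
        (fun i => (∑ j, M i j * (x : (Fin n ⊕ Fin m) → ℝ) (Sum.inl j)) + (x : (Fin n ⊕ Fin m) → ℝ) (Sum.inr i)) := by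
    conv_lhs => rw [hxelim]
    rw [Matrix.fromBlocks_mulVec, Matrix.one_mulVec, Matrix.zero_mulVec,
      Matrix.one_mulVec, add_zero]
    congr 1
  refine ⟨fun j => z (Sum.inl j), ?_, ?_, ?_⟩
  · -- nonzero
    intro hzero
    apply hx0
    have hz0 : ∀ j, (x : (Fin n ⊕ Fin m) → ℝ) (Sum.inl j) = 0 := by
      intro j
      rw [← hz (Sum.inl j)]
      have : z (Sum.inl j) = 0 := congrFun hzero j
      rw [this]; norm_num
    have hw0 : ∀ i, (x : (Fin n ⊕ Fin m) → ℝ) (Sum.inr i) = 0 := by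
      intro i
      have h := hfx (Sum.inr i) (Set.mem_univ _)
      rw [hmv, hblocks] at h
      simp only [Sum.elim_inr, Set.mem_Ioo] at h
      have hsum0 : (∑ j, M i j * (x : (Fin n ⊕ Fin m) → ℝ) (Sum.inl j)) = 0 := by
        apply Finset.sum_eq_zero
        intro j _
        rw [hz0 j, mul_zero]
      rw [hsum0, zero_add] at h
      have hc' : c (Sum.inr i) = δ := rfl
      rw [hc'] at h
      rw [← hz (Sum.inr i)] at h ⊢
      have : |(z (Sum.inr i) : ℝ)| < 1 := by
        rw [abs_lt]; constructor <;> [linarith [h.1]; linarith [h.2]]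
      have : z (Sum.inr i) = 0 := by
        have := Int.abs_lt_one_iff.mp (by exact_mod_cast this)
        exact this
      rw [this]; norm_num
    have : (x : (Fin n ⊕ Fin m) → ℝ) = 0 := by
      funext i
      cases i with
      | inl j => exact hz0 j
      | inr i => exact hw0 i
    exact Subtype.ext (by simpa using this)
  · -- box bounds
    intro j
    have h := hfx (Sum.inl j) (Set.mem_univ _)
    rw [hmv, hblocks] at h
    simp only [Sum.elim_inl, Function.comp_apply, Set.mem_Ioo] at h
    have hc' : c (Sum.inl j) = b j := rfl
    rw [hc'] at h
    rw [hz (Sum.inl j)]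
    rw [abs_lt]
    exact ⟨by linarith [h.1], h.2⟩
  · -- linear forms
    intro i
    refine ⟨z (Sum.inr i), ?_⟩
    have h := hfx (Sum.inr i) (Set.mem_univ _)
    rw [hmv, hblocks] at h
    simp only [Sum.elim_inr, Set.mem_Ioo] at h
    have hc' : c (Sum.inr i) = δ := rfl
    rw [hc'] at h
    have heq : (∑ j, ((z (Sum.inl j) : ℝ)) * M i j) + (z (Sum.inr i) : ℝ) =
        (∑ j, M i j * (x : (Fin n ⊕ Fin m) → ℝ) (Sum.inl j)) + (x : (Fin n ⊕ Fin m) → ℝ) (Sum.inr i) := by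
      rw [hz (Sum.inr i)]
      congr 1
      apply Finset.sum_congr rfl
      intro j _
      rw [hz (Sum.inl j), mul_comm]
    rw [heq, abs_lt]
    exact ⟨by linarith [h.1], h.2⟩

end Box

/-- Under the dual badly-approximable assumption on `M` with
constant `γ`, setting `R = ⌈γ^{−1/k₁}⌉ + 1` and `T_r = R^r`, there exist
sequences of best approximation vectors `u_r ∈ ℤⁿ`, `v_r ∈ ℤᵐ` with
`φ_r = max_i |M_i(u_r) − v_i(r)|` satisfying (i)–(v) and the extra bounds. -/
theorem exists_best_approx_sequence (n m : ℕ) (hn : 0 < n) (hm : 0 < m)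
    (k : Fin n → ℝ) (hk : ∀ j, 0 < k j) (hksum : ∑ j, k j = 1)
    (hk1 : ∀ j, k j ≤ k ⟨0, hn⟩)
    (M : Matrix (Fin m) (Fin n) ℝ) (γ : ℝ) (hγ : γ ∈ Set.Ioo (0 : ℝ) 1)
    (hbad : ∀ u : Fin n → ℤ, u ≠ 0 → ∃ i : Fin m,
      γ ≤ (⨆ j, |(u j : ℝ)| ^ (1 / ((m : ℝ) * k j))) * dni (∑ j, (u j : ℝ) * M i j))
    (R : ℕ) (hR : R = ⌈γ ^ (-(1 / k ⟨0, hn⟩))⌉₊ + 1) :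
    ∃ (u : ℕ → Fin n → ℤ) (v : ℕ → Fin m → ℤ) (φ : ℕ → ℝ),
      (∀ r : ℕ, φ r = ⨆ i, |(∑ j, (u r j : ℝ) * M i j) - (v r i : ℝ)|) ∧
      (∀ r : ℕ,
        ((R : ℝ) ^ r) ^ ((m : ℝ) * k ⟨0, hn⟩) < |(u r ⟨0, hn⟩ : ℝ)| ∧
        |(u r ⟨0, hn⟩ : ℝ)| ≤ γ ^ (-(m : ℝ)) * ((R : ℝ) ^ r) ^ ((m : ℝ) * k ⟨0, hn⟩)) ∧
      (∀ r : ℕ, ∀ j : Fin n, j ≠ ⟨0, hn⟩ →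
        |(u r j : ℝ)| ≤ ((R : ℝ) ^ r) ^ ((m : ℝ) * k j)) ∧
      (∀ r : ℕ,
        γ ^ (1 + 1 / k ⟨0, hn⟩) * ((R : ℝ) ^ r)⁻¹ ≤ φ r ∧ φ r ≤ γ * ((R : ℝ) ^ r)⁻¹) ∧
      (∀ r : ℕ, φ (r + 1) < φ r) ∧
      Tendsto φ atTop (nhds 0) ∧
      (∀ r : ℕ, φ r ≤ γ * (R : ℝ) * ((R : ℝ) ^ (r + 1))⁻¹) ∧
      (∀ r : ℕ, (⨆ i, dni (∑ j, (u r j : ℝ) * M i j)) = φ r) := by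
  classical
  obtain ⟨hγ0, hγ1⟩ := hγ
  set j0 : Fin n := ⟨0, hn⟩ with hj0
  haveI : Nonempty (Fin n) := ⟨j0⟩
  haveI : Nonempty (Fin m) := ⟨⟨0, hm⟩⟩
  have hk0 : 0 < k j0 := hk j0
  have hmpos : (0 : ℝ) < m := Nat.cast_pos.mpr hm
  have hmk : ∀ j, (0 : ℝ) < (m : ℝ) * k j := fun j => mul_pos hmpos (hk j)
  -- the key single-scale statement
  have key : ∀ T : ℝ, 1 ≤ T → ∃ u : Fin n → ℤ,
      (T ^ ((m : ℝ) * k j0) < |(u j0 : ℝ)| ∧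
        |(u j0 : ℝ)| ≤ γ ^ (-(m : ℝ)) * T ^ ((m : ℝ) * k j0)) ∧
      (∀ j : Fin n, j ≠ j0 → |(u j : ℝ)| ≤ T ^ ((m : ℝ) * k j)) ∧
      (γ ^ (1 + 1 / k j0) * T⁻¹ ≤ ⨆ i, dni (∑ j, (u j : ℝ) * M i j)) ∧
      (⨆ i, dni (∑ j, (u j : ℝ) * M i j)) ≤ γ * T⁻¹ := by
    intro T hT
    have hT0 : (0 : ℝ) < T := lt_of_lt_of_le one_pos hT
    set B : Fin n → ℝ :=
      fun j => (if j = j0 then γ ^ (-(m : ℝ)) else 1) * T ^ ((m : ℝ) * k j) with hB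
    have hB0 : ∀ j, 0 < B j := by
      intro j
      rw [hB]
      have h1 : 0 < T ^ ((m : ℝ) * k j) := Real.rpow_pos_of_pos hT0 _
      by_cases hj : j = j0 <;> simp [hj] <;> positivity
    set b : Fin n → ℝ := fun j => (⌊B j⌋₊ : ℝ) + 1 with hb
    have hbpos : ∀ j, 0 < b j := fun j => by rw [hb]; positivity
    have hBb : ∀ j, B j < b j := fun j => Nat.lt_floor_add_one (B j)
    set δ : ℝ := γ / T with hδdef
    have hδ0 : 0 < δ := div_pos hγ0 hT0
    have hδ1 : δ ≤ 1 := by rw [hδdef, div_le_one hT0]; linarith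
    have hBprod : (∏ j, B j) * δ ^ m = 1 := by
      have h1 : (∏ j, (if j = j0 then γ ^ (-(m : ℝ)) else 1)) = γ ^ (-(m : ℝ)) := by
        rw [Finset.prod_ite_eq']
        simp
      have h2 : (∏ j, T ^ ((m : ℝ) * k j)) = T ^ (m : ℝ) := by
        rw [← Real.rpow_sum_of_pos hT0, ← Finset.mul_sum, hksum, mul_one]
      have h3 : (∏ j, B j) = γ ^ (-(m : ℝ)) * T ^ (m : ℝ) := by
        rw [hB, Finset.prod_mul_distrib, h1, h2]
      rw [h3, Real.rpow_neg hγ0.le, Real.rpow_natCast, Real.rpow_natCast, hδdef, div_pow]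
      have hγm : (0 : ℝ) < γ ^ m := pow_pos hγ0 m
      have hTm : (0 : ℝ) < T ^ m := pow_pos hT0 m
      field_simp
    have hvol : 1 < (∏ j, b j) * δ ^ m := by
      rw [← hBprod]
      exact mul_lt_mul_of_pos_right
        (Finset.prod_lt_prod_of_nonempty (fun j _ => hB0 j) (fun j _ => hBb j)
          Finset.univ_nonempty) (pow_pos hδ0 m)
    obtain ⟨u, hu0, hub, hw⟩ := dirichlet_box hn hm M b δ hδ0 hδ1 hbpos hvol
    have hub' : ∀ j, |(u j : ℝ)| ≤ B j := by
      intro j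
      have h1 : |(u j : ℝ)| < (⌊B j⌋₊ : ℝ) + 1 := hub j
      have h2 : ((|u j| : ℤ) : ℝ) < (⌊B j⌋₊ : ℝ) + 1 := by rwa [Int.cast_abs]
      have h3 : |u j| ≤ (⌊B j⌋₊ : ℤ) := by
        have h4 : |u j| < (⌊B j⌋₊ : ℤ) + 1 := by exact_mod_cast h2
        omega
      calc |(u j : ℝ)| = ((|u j| : ℤ) : ℝ) := Int.cast_abs.symm
        _ ≤ (⌊B j⌋₊ : ℝ) := by exact_mod_cast h3
        _ ≤ B j := Nat.floor_le (hB0 j).le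
    have hu0b : |(u j0 : ℝ)| ≤ γ ^ (-(m : ℝ)) * T ^ ((m : ℝ) * k j0) := by
      have := hub' j0
      rw [hB] at this
      simpa using this
    have hujb : ∀ j, j ≠ j0 → |(u j : ℝ)| ≤ T ^ ((m : ℝ) * k j) := by
      intro j hj
      have := hub' j
      rw [hB] at this
      simpa [hj] using this
    -- the sup of the distances
    have hd : ∀ i, dni (∑ j, (u j : ℝ) * M i j) < δ := by
      intro i
      obtain ⟨w, hwlt⟩ := hw i
      have h1 : dni (∑ j, (u j : ℝ) * M i j) ≤
          |(∑ j, (u j : ℝ) * M i j) - ((-w : ℤ) : ℝ)| := round_le _ (-w)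
      have h2 : |(∑ j, (u j : ℝ) * M i j) - ((-w : ℤ) : ℝ)| =
          |(∑ j, (u j : ℝ) * M i j) + (w : ℝ)| := by push_cast; ring_nf
      rw [h2] at h1
      exact lt_of_le_of_lt h1 hwlt
    have hbddd : BddAbove (Set.range fun i => dni (∑ j, (u j : ℝ) * M i j)) :=
      (Set.finite_range _).bddAbove
    have hΦub : (⨆ i, dni (∑ j, (u j : ℝ) * M i j)) ≤ γ * T⁻¹ := by
      refine (ciSup_le fun i => (hd i).le).trans ?_
      rw [hδdef, div_eq_mul_inv]
    have hΦlt : (⨆ i, dni (∑ j, (u j : ℝ) * M i j)) < δ := by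
      obtain ⟨i₀, hi₀⟩ := Finite.exists_max (fun i => dni (∑ j, (u j : ℝ) * M i j))
      exact lt_of_le_of_lt (ciSup_le fun i => hi₀ i) (hd i₀)
    obtain ⟨i₁, hi₁⟩ := hbad u hu0
    set W := ⨆ j, |(u j : ℝ)| ^ (1 / ((m : ℝ) * k j)) with hW
    have hdle : dni (∑ j, (u j : ℝ) * M i₁ j) ≤
        ⨆ i, dni (∑ j, (u j : ℝ) * M i j) := le_ciSup hbddd i₁
    have hd0 : 0 ≤ dni (∑ j, (u j : ℝ) * M i₁ j) := abs_nonneg _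
    -- bounds on W
    have hWcomp0 : |(u j0 : ℝ)| ^ (1 / ((m : ℝ) * k j0)) ≤ γ ^ (-(1 / k j0)) * T := by
      have h1 := Real.rpow_le_rpow (abs_nonneg _) hu0b (le_of_lt (one_div_pos.mpr (hmk j0)))
      refine h1.trans_eq ?_
      rw [Real.mul_rpow (Real.rpow_nonneg hγ0.le _) (Real.rpow_nonneg hT0.le _),
        ← Real.rpow_mul hγ0.le, ← Real.rpow_mul hT0.le]
      congr 1
      · congr 1
        field_simp
      · rw [mul_one_div, div_self (ne_of_gt (hmk j0)), Real.rpow_one]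
    have hWcompj : ∀ j, j ≠ j0 → |(u j : ℝ)| ^ (1 / ((m : ℝ) * k j)) ≤ T := by
      intro j hj
      have h1 := Real.rpow_le_rpow (abs_nonneg _) (hujb j hj) (le_of_lt (one_div_pos.mpr (hmk j)))
      refine h1.trans_eq ?_
      rw [← Real.rpow_mul hT0.le, mul_one_div, div_self (ne_of_gt (hmk j)), Real.rpow_one]
    have hγinv1 : 1 ≤ γ ^ (-(1 / k j0)) :=
      Real.one_le_rpow_of_pos_of_le_one_of_nonpos hγ0 hγ1.le
        (neg_nonpos.mpr (le_of_lt (div_pos one_pos hk0)))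
    have hWub : W ≤ γ ^ (-(1 / k j0)) * T := by
      rw [hW]
      refine ciSup_le fun j => ?_
      by_cases hj : j = j0
      · rw [hj]; exact hWcomp0
      · exact (hWcompj j hj).trans (le_mul_of_one_le_left hT0.le hγinv1)
    have hdpos : 0 < dni (∑ j, (u j : ℝ) * M i₁ j) := by
      rcases lt_or_eq_of_le hd0 with h | h
      · exact h
      · exfalso; rw [← h, mul_zero] at hi₁; linarith
    have hWpos : 0 < W := by
      by_contra h
      push_neg at h
      have h1 : W * dni (∑ j, (u j : ℝ) * M i₁ j) ≤ 0 :=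
        mul_nonpos_iff.mpr (Or.inr ⟨h, hd0⟩)
      linarith
    have hΦpos : 0 < ⨆ i, dni (∑ j, (u j : ℝ) * M i j) := lt_of_lt_of_le hdpos hdle
    -- lower bound on Φ
    have hγleWΦ : γ ≤ W * ⨆ i, dni (∑ j, (u j : ℝ) * M i j) :=
      hi₁.trans (mul_le_mul_of_nonneg_left hdle hWpos.le)
    have hγle2 : γ ≤ (γ ^ (-(1 / k j0)) * T) * ⨆ i, dni (∑ j, (u j : ℝ) * M i j) :=
      hγleWΦ.trans (mul_le_mul_of_nonneg_right hWub hΦpos.le)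
    have hx : 0 < γ ^ ((1 : ℝ) / k j0) := Real.rpow_pos_of_pos hγ0 _
    have hrwneg : γ ^ (-(1 / k j0)) = (γ ^ ((1 : ℝ) / k j0))⁻¹ := by
      rw [← Real.rpow_neg hγ0.le]
    have hrwadd : γ ^ (1 + 1 / k j0) = γ * γ ^ ((1 : ℝ) / k j0) := by
      rw [Real.rpow_add hγ0, Real.rpow_one]
    have hΦlb : γ ^ (1 + 1 / k j0) * T⁻¹ ≤ ⨆ i, dni (∑ j, (u j : ℝ) * M i j) := by
      rw [hrwneg] at hγle2
      set Φ := ⨆ i, dni (∑ j, (u j : ℝ) * M i j) with hΦ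
      have h5 : γ * (γ ^ ((1 : ℝ) / k j0) * T⁻¹) ≤
          ((γ ^ ((1 : ℝ) / k j0))⁻¹ * T * Φ) * (γ ^ ((1 : ℝ) / k j0) * T⁻¹) :=
        mul_le_mul_of_nonneg_right hγle2 (by positivity)
      have h6 : ((γ ^ ((1 : ℝ) / k j0))⁻¹ * T * Φ) * (γ ^ ((1 : ℝ) / k j0) * T⁻¹) = Φ := by
        field_simp
      rw [h6] at h5
      rw [hrwadd]
      calc γ * γ ^ ((1 : ℝ) / k j0) * T⁻¹ = γ * (γ ^ ((1 : ℝ) / k j0) * T⁻¹) := by ring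
        _ ≤ Φ := h5
    -- strict lower bound on |u j0|
    have h8 : γ < W * δ := by
      have := mul_lt_mul_of_pos_left (hd i₁) hWpos
      exact lt_of_le_of_lt hi₁ this
    have h9 : T < W := by
      by_contra h
      push_neg at h
      have h1 : W * δ ≤ T * δ := mul_le_mul_of_nonneg_right h hδ0.le
      have h2 : T * δ = γ := by rw [hδdef]; field_simp
      linarith
    have h10 : W ≤ max (|(u j0 : ℝ)| ^ (1 / ((m : ℝ) * k j0))) T := by
      rw [hW]
      refine ciSup_le fun j => ?_
      by_cases hj : j = j0
      · rw [hj]; exact le_max_left _ _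
      · exact (hWcompj j hj).trans (le_max_right _ _)
    have h11 : T < |(u j0 : ℝ)| ^ (1 / ((m : ℝ) * k j0)) := by
      by_contra h
      push_neg at h
      have := max_le h le_rfl
      linarith
    have h12 : T ^ ((m : ℝ) * k j0) < |(u j0 : ℝ)| := by
      have h13 := Real.rpow_lt_rpow hT0.le h11 (hmk j0)
      rwa [← Real.rpow_mul (abs_nonneg _), one_div,
        inv_mul_cancel₀ (ne_of_gt (hmk j0)), Real.rpow_one] at h13
    exact ⟨u, ⟨h12, hu0b⟩, hujb, hΦlb, hΦub⟩
  -- facts about R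
  have hXgt1 : 1 < γ ^ (-(1 / k j0)) := by
    rw [Real.one_lt_rpow_iff_of_pos hγ0]
    exact Or.inr ⟨hγ1, by rw [neg_lt, neg_zero]; positivity⟩
  have hRX : γ ^ (-(1 / k j0)) < (R : ℝ) := by
    rw [hR]
    push_cast
    have := Nat.le_ceil (γ ^ (-(1 / k j0)))
    linarith
  have hR1 : (1 : ℝ) < (R : ℝ) := hXgt1.trans hRX
  have hR0 : (0 : ℝ) < (R : ℝ) := lt_trans one_pos hR1
  have hTpow : ∀ r : ℕ, (1 : ℝ) ≤ (R : ℝ) ^ r := fun r => one_le_pow₀ hR1.le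
  choose u hu using fun r : ℕ => key ((R : ℝ) ^ r) (hTpow r)
  refine ⟨u, fun r i => round (∑ j, (u r j : ℝ) * M i j),
    fun r => ⨆ i, |(∑ j, (u r j : ℝ) * M i j) -
      ((round (∑ j, (u r j : ℝ) * M i j) : ℤ) : ℝ)|,
    fun r => rfl, fun r => (hu r).1, fun r => (hu r).2.1, fun r => ⟨(hu r).2.2.1, (hu r).2.2.2⟩,
    ?_, ?_, ?_, fun r => rfl⟩
  · -- strict decrease
    intro r
    have h1 := (hu (r + 1)).2.2.2
    have h2 := (hu r).2.2.1
    have hx : 0 < γ ^ ((1 : ℝ) / k j0) := Real.rpow_pos_of_pos hγ0 _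
    have hrwneg : γ ^ (-(1 / k j0)) = (γ ^ ((1 : ℝ) / k j0))⁻¹ := by
      rw [← Real.rpow_neg hγ0.le]
    have hrwadd : γ ^ (1 + 1 / k j0) = γ * γ ^ ((1 : ℝ) / k j0) := by
      rw [Real.rpow_add hγ0, Real.rpow_one]
    have hRgt : (γ ^ ((1 : ℝ) / k j0))⁻¹ < (R : ℝ) := by rw [← hrwneg]; exact hRX
    have hkey : (R : ℝ)⁻¹ < γ ^ ((1 : ℝ) / k j0) := by
      have h1a : 1 < (R : ℝ) * γ ^ ((1 : ℝ) / k j0) := by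
        have h1b := mul_lt_mul_of_pos_right hRgt hx
        rwa [inv_mul_cancel₀ (ne_of_gt hx)] at h1b
      have h1c := mul_lt_mul_of_pos_left h1a (inv_pos.mpr hR0)
      rwa [mul_one, ← mul_assoc, inv_mul_cancel₀ (ne_of_gt hR0), one_mul] at h1c
    have hPpos : (0 : ℝ) < ((R : ℝ) ^ r)⁻¹ := by positivity
    have hmid : γ * ((R : ℝ) ^ (r + 1))⁻¹ < γ ^ (1 + 1 / k j0) * ((R : ℝ) ^ r)⁻¹ := by
      rw [hrwadd, pow_succ, mul_inv]
      calc γ * (((R : ℝ) ^ r)⁻¹ * (R : ℝ)⁻¹)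
          < γ * (((R : ℝ) ^ r)⁻¹ * γ ^ ((1 : ℝ) / k j0)) := by
            exact mul_lt_mul_of_pos_left (mul_lt_mul_of_pos_left hkey hPpos) hγ0
        _ = γ * γ ^ ((1 : ℝ) / k j0) * ((R : ℝ) ^ r)⁻¹ := by ring
    exact lt_of_le_of_lt h1 (lt_of_lt_of_le hmid h2)
  · -- tendsto
    have h0le : ∀ r : ℕ, 0 ≤ ⨆ i, |(∑ j, (u r j : ℝ) * M i j) -
        ((round (∑ j, (u r j : ℝ) * M i j) : ℤ) : ℝ)| := by
      intro r
      refine le_trans ?_ (hu r).2.2.1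
      have := Real.rpow_nonneg hγ0.le (1 + 1 / k j0)
      positivity
    have hlim : Tendsto (fun r : ℕ => γ * ((R : ℝ) ^ r)⁻¹) atTop (nhds 0) := by
      have h := tendsto_pow_atTop_atTop_of_one_lt hR1
      have h2 := h.inv_tendsto_atTop
      simpa using h2.const_mul γ
    exact squeeze_zero h0le (fun r => (hu r).2.2.2) hlim
  · -- extra bound
    intro r
    have h1 := (hu r).2.2.2
    have hRne : (R : ℝ) ≠ 0 := ne_of_gt hR0
    have heq : γ * (R : ℝ) * (((R : ℝ) ^ (r + 1))⁻¹) = γ * ((R : ℝ) ^ r)⁻¹ := by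
      rw [pow_succ, mul_inv]
      field_simp
    rw [heq]
    exact h1
end

section
/- Let n, m ≥ 1 be integers, let k = (k_1,…,k_n) be a weight vector with k_1 = max_{1≤j≤n} k_j, let L be an n×m real matrix with dual forms M_i, and let γ ∈ (0,1) be such that inf_{u ∈ ℤ^n, u ≠ 0} max_{1≤i≤m} ( max_{1≤j≤n} |u_j|^{1/(m k_j)} ) ‖M_i(u)‖ ≥ γ. Set R = ⌈γ^{−1/k_1}⌉ + 1, T_r = R^r, and let u_r ∈ ℤ^n be a sequence satisfying: T_r^{m k_1} < |u_1(r)| ≤ γ^{−m} T_r^{m k_1}, |u_j(r)| ≤ T_r^{m k_j} for 2 ≤ j ≤ n, and φ_r := max_{1≤i≤m} ‖M_i(u_r)‖ satisfies γ^{1+1/k_1} T_r^{−1} ≤ φ_r ≤ γ T_r^{−1}, with φ_r strictly decreasing and φ_r → 0. Then every α ∈ [0,1)^n with inf_r ‖u_r · α‖ > 0 belongs to Bad_L(k,n,m); that is, { α ∈ [0,1)^n : inf_r ‖u_r · α‖ > 0 } ⊆ Bad_L(k,n,m). -/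
/-- Supremum norm of an integer vector, as a real number. -/
noncomputable def snorm {d : ℕ} (q : Fin d → ℤ) : ℝ := ⨆ i, |(q i : ℝ)|

/-- Euclidean norm of an integer vector. -/
noncomputable def enorm {d : ℕ} (u : Fin d → ℤ) : ℝ := Real.sqrt (∑ j, ((u j : ℝ)) ^ 2)

/-- `L ∈ Bad(k, n, m)`:  inf over nonzero integer vectors `q` of
`max_j |q|_∞^{m k_j} ‖L_j(q)‖` is positive. -/
def badForm {n m : ℕ} (k : Fin n → ℝ) (L : Matrix (Fin n) (Fin m) ℝ) : Prop :=
  ∃ ε > (0 : ℝ), ∀ q : Fin m → ℤ, q ≠ 0 →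
    ∃ j : Fin n, ε ≤ snorm q ^ ((m : ℝ) * k j) * dni (∑ i, (q i : ℝ) * L j i)

/-- The twisted set `Bad_L(k, n, m) ⊆ [0,1)^n`. -/
def badTwisted {n m : ℕ} (k : Fin n → ℝ) (L : Matrix (Fin n) (Fin m) ℝ) :
    Set (Fin n → ℝ) :=
  {α | (∀ j, α j ∈ Set.Ico (0 : ℝ) 1) ∧ ∃ ε > (0 : ℝ), ∀ q : Fin m → ℤ, q ≠ 0 →
    ∃ j : Fin n, ε ≤ snorm q ^ ((m : ℝ) * k j) * dni ((∑ i, (q i : ℝ) * L j i) - α j)}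

open Filter

lemma dni_nonneg (x : ℝ) : 0 ≤ dni x := abs_nonneg _

lemma dni_le_abs_sub_int (x : ℝ) (z : ℤ) : dni x ≤ |x - z| := round_le x z

/-- With `L ∈ Bad(k,n,m)`-type data: dual forms
`M_i(u) = Σ_j u_j x_{ji}` badly approximable with constant `γ`, and a sequence
`u_r` of best approximations with `φ_r = max_i ‖M_i(u_r)‖` controlled as in the
paper, every `α ∈ [0,1)^n` with `inf_r ‖u_r · α‖ > 0` lies in `Bad_L(k,n,m)`. -/
theorem subset_badTwisted (n m : ℕ) (hn : 0 < n) (hm : 0 < m)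
    (k : Fin n → ℝ) (hk : ∀ j, 0 < k j) (hksum : ∑ j, k j = 1)
    (hk1 : ∀ j, k j ≤ k ⟨0, hn⟩)
    (L : Matrix (Fin n) (Fin m) ℝ) (γ : ℝ) (hγ : γ ∈ Set.Ioo (0 : ℝ) 1)
    (hbad : ∀ u : Fin n → ℤ, u ≠ 0 → ∃ i : Fin m,
      γ ≤ (⨆ j, |(u j : ℝ)| ^ (1 / ((m : ℝ) * k j))) * dni (∑ j, (u j : ℝ) * L j i))
    (R : ℕ) (hR : R = ⌈γ ^ (-(1 / k ⟨0, hn⟩))⌉₊ + 1)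
    (u : ℕ → Fin n → ℤ) (φ : ℕ → ℝ)
    (hφ : ∀ r : ℕ, φ r = ⨆ i, dni (∑ j, (u r j : ℝ) * L j i))
    (hu1 : ∀ r : ℕ,
      ((R : ℝ) ^ r) ^ ((m : ℝ) * k ⟨0, hn⟩) < |(u r ⟨0, hn⟩ : ℝ)| ∧
      |(u r ⟨0, hn⟩ : ℝ)| ≤ γ ^ (-(m : ℝ)) * ((R : ℝ) ^ r) ^ ((m : ℝ) * k ⟨0, hn⟩))
    (huj : ∀ r : ℕ, ∀ j : Fin n, j ≠ ⟨0, hn⟩ →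
      |(u r j : ℝ)| ≤ ((R : ℝ) ^ r) ^ ((m : ℝ) * k j))
    (hφbd : ∀ r : ℕ,
      γ ^ (1 + 1 / k ⟨0, hn⟩) * ((R : ℝ) ^ r)⁻¹ ≤ φ r ∧ φ r ≤ γ * ((R : ℝ) ^ r)⁻¹)
    (hφdec : ∀ r : ℕ, φ (r + 1) < φ r)
    (hφlim : Tendsto φ atTop (nhds 0)) :
    {α : Fin n → ℝ | (∀ j, α j ∈ Set.Ico (0 : ℝ) 1) ∧
        ∃ ε > (0 : ℝ), ∀ r : ℕ, ε ≤ dni (∑ j, (u r j : ℝ) * α j)}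
      ⊆ badTwisted k L := by
  classical
  intro α hα
  obtain ⟨hα01, ε, hε, hεr⟩ := hα
  have hγ0 : (0:ℝ) < γ := hγ.1
  have hγ1 : γ < 1 := hγ.2
  have hn' : (0:ℝ) < n := by exact_mod_cast hn
  have hm' : (0:ℝ) < m := by exact_mod_cast hm
  have hR1 : (1:ℝ) ≤ (R:ℝ) := by
    have : 1 ≤ R := by omega
    exact_mod_cast this
  have hRpos : (0:ℝ) < (R:ℝ) := lt_of_lt_of_le one_pos hR1
  have hkle1 : ∀ j, k j ≤ 1 := by
    intro j
    calc k j ≤ ∑ i, k i := Finset.single_le_sum (fun i _ => (hk i).le) (Finset.mem_univ j)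
    _ = 1 := hksum
  set C : ℝ := 2*m*γ*R/ε + 1 with hC
  have hCaux : 0 < 2*m*γ*R/ε := by positivity
  have hC1 : (1:ℝ) ≤ C := by simp only [hC]; linarith
  have hC0 : (0:ℝ) < C := lt_of_lt_of_le one_pos hC1
  set G : ℝ := γ ^ (m:ℝ) with hG
  have hG0 : 0 < G := Real.rpow_pos_of_pos hγ0 _
  have hG1 : G ≤ 1 := Real.rpow_le_one hγ0.le hγ1.le (by positivity)
  set D : ℝ := C ^ (m:ℝ) with hD
  have hD1 : (1:ℝ) ≤ D := Real.one_le_rpow hC1 (by positivity)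
  have hD0 : (0:ℝ) < D := lt_of_lt_of_le one_pos hD1
  have hγm : γ ^ (-(m:ℝ)) = G⁻¹ := by rw [Real.rpow_neg hγ0.le]
  have hGinv1 : (1:ℝ) ≤ G⁻¹ := by
    rw [le_inv_comm₀ one_pos hG0]; simpa using hG1
  refine ⟨hα01, ε * G / (2*n*D), by positivity, ?_⟩
  intro q hq
  -- facts about the sup norm of q
  set Q := snorm q with hQdef
  have hQmem : ∀ i, |(q i:ℝ)| ≤ Q := fun i =>
    le_ciSup (f := fun i => |((q i : ℤ) : ℝ)|)
      (Set.Finite.bddAbove (Set.finite_range _)) i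
  have hQ1 : (1:ℝ) ≤ Q := by
    obtain ⟨i, hi⟩ := Function.ne_iff.mp hq
    have h1 : (1:ℝ) ≤ |(q i:ℝ)| := by
      have := Int.one_le_abs hi
      calc (1:ℝ) = ((1:ℤ):ℝ) := by norm_num
      _ ≤ ((|q i|:ℤ):ℝ) := by exact_mod_cast this
      _ = |(q i:ℝ)| := by push_cast; ring
    exact h1.trans (hQmem i)
  have hQ0 : (0:ℝ) < Q := lt_of_lt_of_le one_pos hQ1
  set c := ε / (2*m*Q) with hc
  have hc0 : 0 < c := by positivity
  have hex : ∃ r, φ r ≤ c := by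
    obtain ⟨r, hr⟩ := (hφlim.eventually (gt_mem_nhds hc0)).exists
    exact ⟨r, hr.le⟩
  obtain ⟨r0, hφr0, hmin⟩ : ∃ r0, φ r0 ≤ c ∧ ∀ s, s < r0 → c < φ s :=
    ⟨Nat.find hex, Nat.find_spec hex, fun s hs => lt_of_not_ge (Nat.find_min hex hs)⟩
  set T : ℝ := (R:ℝ)^r0 with hT
  have hT1 : (1:ℝ) ≤ T := one_le_pow₀ hR1
  have hT0 : (0:ℝ) < T := lt_of_lt_of_le one_pos hT1
  -- each dual form value is at most φ r0
  have hMle : ∀ i, dni (∑ j, (u r0 j:ℝ) * L j i) ≤ φ r0 := by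
    intro i
    rw [hφ]
    exact le_ciSup (f := fun i => dni (∑ j, ((u r0 j : ℤ) : ℝ) * L j i))
      (Set.Finite.bddAbove (Set.finite_range _)) i
  -- the key transference inequality
  have hswap : ∑ i, (q i:ℝ) * ∑ j, (u r0 j:ℝ) * L j i
      = ∑ j, (u r0 j:ℝ) * ∑ i, (q i:ℝ) * L j i := by
    simp_rw [Finset.mul_sum]
    rw [Finset.sum_comm]
    exact Finset.sum_congr rfl fun j _ => Finset.sum_congr rfl fun i _ => by ring
  have key : ε ≤ ∑ i, |(q i:ℝ)| * dni (∑ j, (u r0 j:ℝ) * L j i)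
      + ∑ j, |(u r0 j:ℝ)| * dni ((∑ i, (q i:ℝ) * L j i) - α j) := by
    refine (hεr r0).trans ?_
    set N : ℤ := (∑ i, q i * round (∑ j, (u r0 j:ℝ) * L j i))
      - ∑ j, u r0 j * round ((∑ i, (q i:ℝ) * L j i) - α j) with hN
    have h1 : dni (∑ j, (u r0 j:ℝ) * α j) ≤ |(∑ j, (u r0 j:ℝ) * α j) - (N:ℝ)| :=
      dni_le_abs_sub_int _ _
    have hident : (∑ j, (u r0 j:ℝ) * α j) - (N:ℝ)
        = (∑ i, (q i:ℝ) * ((∑ j, (u r0 j:ℝ) * L j i)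
            - (round (∑ j, (u r0 j:ℝ) * L j i) : ℝ)))
          - ∑ j, (u r0 j:ℝ) * (((∑ i, (q i:ℝ) * L j i) - α j)
            - (round ((∑ i, (q i:ℝ) * L j i) - α j) : ℝ)) := by
      have e1 : ((N : ℤ) : ℝ)
          = (∑ i, (q i:ℝ) * (round (∑ j, (u r0 j:ℝ) * L j i) : ℝ))
            - ∑ j, (u r0 j:ℝ) * (round ((∑ i, (q i:ℝ) * L j i) - α j) : ℝ) := by
        rw [hN]; push_cast; ring
      have eA : ∑ i, (q i:ℝ) * ((∑ j, (u r0 j:ℝ) * L j i)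
            - (round (∑ j, (u r0 j:ℝ) * L j i) : ℝ))
          = (∑ i, (q i:ℝ) * ∑ j, (u r0 j:ℝ) * L j i)
            - ∑ i, (q i:ℝ) * (round (∑ j, (u r0 j:ℝ) * L j i) : ℝ) := by
        rw [← Finset.sum_sub_distrib]
        exact Finset.sum_congr rfl fun i _ => mul_sub _ _ _
      have eB : ∑ j, (u r0 j:ℝ) * (((∑ i, (q i:ℝ) * L j i) - α j)
            - (round ((∑ i, (q i:ℝ) * L j i) - α j) : ℝ))
          = ((∑ j, (u r0 j:ℝ) * ∑ i, (q i:ℝ) * L j i)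
            - ∑ j, (u r0 j:ℝ) * α j)
            - ∑ j, (u r0 j:ℝ) * (round ((∑ i, (q i:ℝ) * L j i) - α j) : ℝ) := by
        rw [← Finset.sum_sub_distrib, ← Finset.sum_sub_distrib]
        exact Finset.sum_congr rfl fun j _ => by ring
      rw [e1, eA, eB]
      linarith [hswap]
    refine h1.trans ?_
    calc |(∑ j, (u r0 j:ℝ) * α j) - (N:ℝ)|
        ≤ |∑ i, (q i:ℝ) * ((∑ j, (u r0 j:ℝ) * L j i)
            - (round (∑ j, (u r0 j:ℝ) * L j i) : ℝ))|
          + |∑ j, (u r0 j:ℝ) * (((∑ i, (q i:ℝ) * L j i) - α j)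
            - (round ((∑ i, (q i:ℝ) * L j i) - α j) : ℝ))| := by
          rw [hident]; exact abs_sub _ _
      _ ≤ (∑ i, |(q i:ℝ)| * dni (∑ j, (u r0 j:ℝ) * L j i))
          + ∑ j, |(u r0 j:ℝ)| * dni ((∑ i, (q i:ℝ) * L j i) - α j) := by
          gcongr <;>
          · refine (Finset.abs_sum_le_sum_abs _ _).trans (le_of_eq ?_)
            exact Finset.sum_congr rfl fun _ _ => by rw [abs_mul]; rfl
  -- the dual-form part of the sum is at most ε/2
  have hdual : ∑ i, |(q i:ℝ)| * dni (∑ j, (u r0 j:ℝ) * L j i) ≤ ε/2 := by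
    calc ∑ i, |(q i:ℝ)| * dni (∑ j, (u r0 j:ℝ) * L j i)
        ≤ ∑ _i : Fin m, Q * c := by
          refine Finset.sum_le_sum fun i _ => ?_
          exact mul_le_mul (hQmem i) ((hMle i).trans hφr0) (dni_nonneg _) hQ0.le
      _ = m * (Q * c) := by rw [Finset.sum_const, Finset.card_univ, Fintype.card_fin]; simp
      _ = ε/2 := by rw [hc]; field_simp
  have hsum2 : ε/2 ≤ ∑ j, |(u r0 j:ℝ)| * dni ((∑ i, (q i:ℝ) * L j i) - α j) := by
    linarith
  -- pick a coordinate carrying at least its share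
  have hexj : ∃ j : Fin n, ε/(2*n) ≤ |(u r0 j:ℝ)| * dni ((∑ i, (q i:ℝ) * L j i) - α j) := by
    by_contra hcon
    push_neg at hcon
    have : ∑ j, |(u r0 j:ℝ)| * dni ((∑ i, (q i:ℝ) * L j i) - α j)
        < ∑ _j : Fin n, ε/(2*n) := by
      refine Finset.sum_lt_sum_of_nonempty ?_ fun j _ => hcon j
      exact Finset.univ_nonempty_iff.mpr ⟨⟨0, hn⟩⟩
    rw [Finset.sum_const, Finset.card_univ, Fintype.card_fin, nsmul_eq_mul] at this
    have hns : (n:ℝ) * (ε/(2*n)) = ε/2 := by field_simp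
    linarith
  obtain ⟨j, hj⟩ := hexj
  refine ⟨j, ?_⟩
  set d := dni ((∑ i, (q i:ℝ) * L j i) - α j) with hd
  have hd0 : 0 ≤ d := dni_nonneg _
  -- bound on |u_j(r0)|
  have hub : |(u r0 j:ℝ)| ≤ G⁻¹ * T ^ ((m:ℝ) * k j) := by
    by_cases hj0 : j = ⟨0, hn⟩
    · subst hj0
      have := (hu1 r0).2
      rwa [hγm] at this
    · have h1 := huj r0 j hj0
      have h2 : (0:ℝ) ≤ T ^ ((m:ℝ) * k j) := Real.rpow_nonneg hT0.le _
      calc |(u r0 j:ℝ)| ≤ T ^ ((m:ℝ) * k j) := h1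
        _ = 1 * T ^ ((m:ℝ) * k j) := (one_mul _).symm
        _ ≤ G⁻¹ * T ^ ((m:ℝ) * k j) := mul_le_mul_of_nonneg_right hGinv1 h2
  -- bound on T
  have hTQ : T ≤ C * Q := by
    rcases Nat.eq_zero_or_pos r0 with h0 | hpos
    · rw [hT, h0, pow_zero]
      have h1 : (1:ℝ) * 1 ≤ C * Q := mul_le_mul hC1 hQ1 zero_le_one hC0.le
      linarith
    · obtain ⟨s, hs⟩ : ∃ s, r0 = s + 1 := ⟨r0 - 1, (Nat.succ_pred_eq_of_pos hpos).symm⟩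
      have hmin' : c < φ s := hmin s (by omega)
      have h2 : φ s ≤ γ * ((R:ℝ)^s)⁻¹ := (hφbd s).2
      have hRs : (0:ℝ) < (R:ℝ)^s := pow_pos hRpos s
      have h3 : c * (R:ℝ)^s < γ := by
        have h := hmin'.trans_le h2
        rw [← div_eq_mul_inv] at h
        exact (lt_div_iff₀ hRs).mp h
      have h4 : (R:ℝ)^s < γ / c := (lt_div_iff₀ hc0).mpr (by linarith [h3])
      have h5 : T ≤ (γ / c) * R := by
        rw [hT, hs, pow_succ]
        exact mul_le_mul_of_nonneg_right h4.le hRpos.le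
      have h6 : (γ / c) * (R:ℝ) = (2*m*γ*R/ε) * Q := by
        rw [hc]; field_simp
      rw [h6] at h5
      have h7 : (2*m*γ*(R:ℝ)/ε) * Q ≤ C * Q :=
        mul_le_mul_of_nonneg_right (by rw [hC]; linarith) hQ0.le
      exact h5.trans h7
  -- compare powers
  have hmk : (m:ℝ) * k j ≤ (m:ℝ) := by
    have h := mul_le_mul_of_nonneg_left (hkle1 j) hm'.le
    rwa [mul_one] at h
  have hmk0 : (0:ℝ) ≤ (m:ℝ) * k j := mul_nonneg hm'.le (hk j).le
  have hTpow : T ^ ((m:ℝ) * k j) ≤ D * Q ^ ((m:ℝ) * k j) := by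
    calc T ^ ((m:ℝ) * k j) ≤ (C*Q) ^ ((m:ℝ) * k j) :=
          Real.rpow_le_rpow hT0.le hTQ hmk0
      _ = C ^ ((m:ℝ) * k j) * Q ^ ((m:ℝ) * k j) := Real.mul_rpow hC0.le hQ0.le
      _ ≤ D * Q ^ ((m:ℝ) * k j) := by
          refine mul_le_mul_of_nonneg_right ?_ (Real.rpow_nonneg hQ0.le _)
          exact Real.rpow_le_rpow_of_exponent_le hC1 hmk
  -- finish
  have hQpow0 : (0:ℝ) ≤ Q ^ ((m:ℝ) * k j) := Real.rpow_nonneg hQ0.le _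
  have hfinal : ε/(2*n) ≤ G⁻¹ * D * (Q ^ ((m:ℝ) * k j) * d) := by
    calc ε/(2*n) ≤ |(u r0 j:ℝ)| * d := hj
      _ ≤ (G⁻¹ * T ^ ((m:ℝ) * k j)) * d := mul_le_mul_of_nonneg_right hub hd0
      _ ≤ (G⁻¹ * (D * Q ^ ((m:ℝ) * k j))) * d := by
          refine mul_le_mul_of_nonneg_right ?_ hd0
          exact mul_le_mul_of_nonneg_left hTpow (inv_nonneg.mpr hG0.le)
      _ = G⁻¹ * D * (Q ^ ((m:ℝ) * k j) * d) := by ring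
  show ε * G / (2*n*D) ≤ Q ^ ((m:ℝ) * k j) * d
  rw [div_le_iff₀ (mul_pos (by positivity : (0:ℝ) < 2*n) hD0)]
  have h7 := mul_le_mul_of_nonneg_right hfinal (mul_nonneg (mul_nonneg (by positivity : (0:ℝ) ≤ 2*n) hG0.le) hD0.le)
  have hGne : G ≠ 0 := ne_of_gt hG0
  have hDne : D ≠ 0 := ne_of_gt hD0
  have hnne : (n:ℝ) ≠ 0 := ne_of_gt hn'
  have h8 : ε/(2*n) * (2*n*G*D) = ε * G * D := by field_simp
  have h9 : G⁻¹ * D * (Q ^ ((m:ℝ) * k j) * d) * (2*n*G*D)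
      = (Q ^ ((m:ℝ) * k j) * d) * (2*n*D) * D := by field_simp
  rw [h8, h9] at h7
  exact le_of_mul_le_mul_right h7 hD0
end
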